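/- arXiv:0910.1115 — 4 statements merged into one kernel-verified Lean document; each statement's English description precedes it below -/
import Mathlib

section
/- Let α > -1/2 and j_α be defined by the Mehler formula. Then there exist positive constants c₁, c₂ (depending only on α) such that for all λ, t > 0: c₁·min{1, (λt)²} ≤ 1 - j_α(λt) ≤ c₂·min{1, (λt)²}. -/
open MeasureTheory Real Set Filter intervalIntegral Topology

namespace OneSubBessel

lemma betaAux (α : ℝ) (hα : α > -1/2) :
    (IntervalIntegrable (fun x : ℝ => x ^ (-1/2 : ℝ) * (1 - x) ^ (α - 1/2)) volume 0 1) ∧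
    ∫ x in (0:ℝ)..1, x ^ (-1/2 : ℝ) * (1 - x) ^ (α - 1/2) =
      Real.sqrt Real.pi * Real.Gamma (α + 1/2) / Real.Gamma (α + 1) := by
  have hre1 : (0:ℝ) < (1/2 : ℂ).re := by norm_num
  have hre2 : (0:ℝ) < ((α : ℂ) + 1/2).re := by
    simp [Complex.add_re]; linarith
  have hC := Complex.betaIntegral_convergent hre1 hre2
  have heq : EqOn (fun x : ℝ => ((x ^ (-1/2 : ℝ) * (1 - x) ^ (α - 1/2) : ℝ) : ℂ))
      (fun x : ℝ => (x : ℂ) ^ ((1/2 : ℂ) - 1) * (1 - (x : ℂ)) ^ (((α : ℂ) + 1/2) - 1))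
      (uIcc (0:ℝ) 1) := by
    intro x hx
    rw [uIcc_of_le (by norm_num : (0:ℝ) ≤ 1)] at hx
    have hx0 : (0:ℝ) ≤ x := hx.1
    have hx1 : (0:ℝ) ≤ 1 - x := by linarith [hx.2]
    simp only [Complex.ofReal_mul]
    rw [Complex.ofReal_cpow hx0, Complex.ofReal_cpow hx1]
    push_cast
    ring_nf
  have key : Complex.Gamma (1/2) * Complex.Gamma ((α:ℂ) + 1/2) =
      Complex.Gamma ((α:ℂ) + 1) * Complex.betaIntegral (1/2) ((α:ℂ)+1/2) := by
    have := Complex.Gamma_mul_Gamma_eq_betaIntegral hre1 hre2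
    convert this using 3
    ring
  have hbeta : Complex.betaIntegral (1/2) ((α:ℂ)+1/2)
      = ((∫ x in (0:ℝ)..1, x ^ (-1/2 : ℝ) * (1 - x) ^ (α - 1/2) : ℝ) : ℂ) := by
    rw [Complex.betaIntegral, ← intervalIntegral.integral_ofReal,
      intervalIntegral.integral_congr heq]
  have hint : IntervalIntegrable (fun x : ℝ => x ^ (-1/2 : ℝ) * (1 - x) ^ (α - 1/2)) volume 0 1 := by
    rw [intervalIntegrable_iff] at hC ⊢
    have : (fun x : ℝ => x ^ (-1/2 : ℝ) * (1 - x) ^ (α - 1/2)) =ᵐ[volume.restrict (uIoc (0:ℝ) 1)]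
        (fun x : ℝ => ((x : ℂ) ^ ((1/2 : ℂ) - 1) * (1 - (x : ℂ)) ^ (((α : ℂ) + 1/2) - 1)).re) := by
      filter_upwards [ae_restrict_mem measurableSet_uIoc] with x hx
      have := heq (uIoc_subset_uIcc hx)
      simp only at this
      rw [← this, Complex.ofReal_re]
    exact (IntegrableOn.congr_fun_ae hC.re this.symm)
  refine ⟨hint, ?_⟩
  have key2 : (Real.Gamma (1/2) * Real.Gamma (α + 1/2) : ℂ) =
      ((Real.Gamma (α + 1) * ∫ x in (0:ℝ)..1, x ^ (-1/2 : ℝ) * (1 - x) ^ (α - 1/2) : ℝ) : ℂ) := by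
    push_cast
    rw [← Complex.Gamma_ofReal, ← Complex.Gamma_ofReal, ← Complex.Gamma_ofReal]
    push_cast
    rw [key, hbeta]
  have key3 : Real.Gamma (1/2) * Real.Gamma (α + 1/2) =
      Real.Gamma (α + 1) * ∫ x in (0:ℝ)..1, x ^ (-1/2 : ℝ) * (1 - x) ^ (α - 1/2) := by
    exact_mod_cast key2
  have hΓpos : 0 < Real.Gamma (α + 1) := Real.Gamma_pos_of_pos (by linarith)
  rw [Real.Gamma_one_half_eq] at key3
  rw [eq_div_iff hΓpos.ne']
  linarith [key3]

lemma substAux (α : ℝ)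
    (hint : IntervalIntegrable (fun x : ℝ => x ^ (-1/2 : ℝ) * (1 - x) ^ (α - 1/2)) volume 0 1) :
    IntegrableOn (fun y : ℝ => (1 - y ^ 2) ^ (α - 1/2)) (Ioo 0 1) volume ∧
    ∫ y in Ioo (0:ℝ) 1, (1 - y ^ 2) ^ (α - 1/2) =
      (1/2) * ∫ x in (0:ℝ)..1, x ^ (-1/2 : ℝ) * (1 - x) ^ (α - 1/2) := by
  set g : ℝ → ℝ := fun x => x ^ (-1/2 : ℝ) * (1 - x) ^ (α - 1/2) with hg
  have hmeas : MeasurableSet (Ioo (0:ℝ) 1) := measurableSet_Ioo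
  have hderiv : ∀ y ∈ Ioo (0:ℝ) 1, HasDerivWithinAt (fun y : ℝ => y ^ 2) (2 * y) (Ioo 0 1) y := by
    intro y _
    simpa using (hasDerivAt_pow 2 y).hasDerivWithinAt
  have hinj : InjOn (fun y : ℝ => y ^ 2) (Ioo 0 1) := by
    intro a ha b hb h
    simp only at h
    calc a = Real.sqrt (a ^ 2) := (Real.sqrt_sq ha.1.le).symm
    _ = Real.sqrt (b ^ 2) := by rw [h]
    _ = b := Real.sqrt_sq hb.1.le
  have himg : (fun y : ℝ => y ^ 2) '' (Ioo 0 1) = Ioo 0 1 := by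
    ext u
    constructor
    · rintro ⟨y, hy, rfl⟩
      simp only
      exact ⟨pow_pos hy.1 2, by nlinarith [hy.1, hy.2]⟩
    · intro hu
      exact ⟨Real.sqrt u, ⟨Real.sqrt_pos.mpr hu.1,
        by rw [show (1:ℝ) = Real.sqrt 1 by simp]; exact Real.sqrt_lt_sqrt hu.1.le hu.2⟩,
        by simp [Real.sq_sqrt hu.1.le]⟩
  have hgi : IntegrableOn g (Ioo (0:ℝ) 1) volume := by
    have := (intervalIntegrable_iff_integrableOn_Ioo_of_le (by norm_num : (0:ℝ) ≤ 1)).mp hint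
    exact this
  have hae : ∀ y ∈ Ioo (0:ℝ) 1, |2 * y| • g (y ^ 2) = 2 * (1 - y ^ 2) ^ (α - 1/2) := by
    intro y hy
    have hy0 : 0 < y := hy.1
    have h1 : ((y:ℝ) ^ 2) ^ (-1/2 : ℝ) = y⁻¹ := by
      rw [← Real.rpow_natCast y 2, ← Real.rpow_mul hy0.le]
      norm_num
      exact Real.rpow_neg_one y
    simp only [hg, smul_eq_mul]
    rw [h1, abs_of_pos (by linarith : (0:ℝ) < 2 * y)]
    field_simp
  have haeq : (fun y : ℝ => |2 * y| • g (y ^ 2)) =ᵐ[volume.restrict (Ioo (0:ℝ) 1)]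
      (fun y : ℝ => 2 * (1 - y ^ 2) ^ (α - 1/2)) := by
    filter_upwards [ae_restrict_mem hmeas] with y hy using hae y hy
  have hiff := integrableOn_image_iff_integrableOn_abs_deriv_smul hmeas hderiv hinj g
  rw [himg] at hiff
  have h2int : IntegrableOn (fun y : ℝ => 2 * (1 - y ^ 2) ^ (α - 1/2)) (Ioo 0 1) volume :=
    ((hiff.mp hgi).congr_fun_ae haeq)
  have hwint : IntegrableOn (fun y : ℝ => (1 - y ^ 2) ^ (α - 1/2)) (Ioo 0 1) volume := by
    have h3 : IntegrableOn (fun y : ℝ => (1/2 : ℝ) * (2 * (1 - y ^ 2) ^ (α - 1/2))) (Ioo 0 1) volume :=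
      h2int.const_mul (1/2)
    refine h3.congr_fun (fun y _ => by ring) hmeas
  refine ⟨hwint, ?_⟩
  have hchg := integral_image_eq_integral_abs_deriv_smul hmeas hderiv hinj g
  rw [himg] at hchg
  rw [intervalIntegral.integral_of_le (by norm_num : (0:ℝ) ≤ 1),
    MeasureTheory.integral_Ioc_eq_integral_Ioo, hchg, integral_congr_ae haeq,
    MeasureTheory.integral_const_mul]
  ring

lemma rlAux (w : ℝ → ℝ) (hwint : IntegrableOn w (Ioo 0 1) volume) :
    Tendsto (fun r : ℝ => ∫ y in Ioo (0:ℝ) 1, w y * Real.cos (r * y)) atTop (𝓝 0) := by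
  set F : ℝ → ℝ := (Ioo (0:ℝ) 1).indicator w with hF
  have hFint : Integrable F volume := by
    rw [hF, integrable_indicator_iff measurableSet_Ioo]
    exact hwint
  have hFc : Integrable (fun v : ℝ => (F v : ℂ)) volume := hFint.ofReal
  have hRL := Real.zero_at_infty_fourier (fun v : ℝ => (F v : ℂ))
  have hdiv : Tendsto (fun r : ℝ => r / (2 * π)) atTop atTop :=
    Tendsto.atTop_div_const (by positivity) tendsto_id
  have h1 : Tendsto (fun r : ℝ => FourierTransform.fourier (fun v : ℝ => (F v : ℂ)) (r / (2 * π)))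
      atTop (𝓝 0) := by
    refine (hRL.mono_left ?_).comp hdiv
    rw [cocompact_eq_atBot_atTop]
    exact le_sup_right
  have h2 : Tendsto (fun r : ℝ =>
      (FourierTransform.fourier (fun v : ℝ => (F v : ℂ)) (r / (2 * π))).re) atTop (𝓝 0) := by
    have := (Complex.continuous_re.tendsto 0).comp h1
    simpa [Function.comp_def] using this
  have key : ∀ r : ℝ, ∫ y in Ioo (0:ℝ) 1, w y * Real.cos (r * y)
      = (FourierTransform.fourier (fun v : ℝ => (F v : ℂ)) (r / (2 * π))).re := by
    intro r
    rw [Real.fourier_real_eq_integral_exp_smul]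
    have hint2 : Integrable (fun v : ℝ =>
        Complex.exp (↑(-2 * π * v * (r / (2 * π))) * Complex.I) • (F v : ℂ)) volume := by
      refine Integrable.mono' hFint.abs ?_ ?_
      · refine AEStronglyMeasurable.mul ?_ hFc.aestronglyMeasurable
        refine Continuous.aestronglyMeasurable ?_
        exact Complex.continuous_exp.comp
          ((Complex.continuous_ofReal.comp (by continuity)).mul continuous_const)
      · filter_upwards with v
        rw [smul_eq_mul, norm_mul, Complex.norm_exp_ofReal_mul_I,
          one_mul, Complex.norm_real, Real.norm_eq_abs]
    rw [← RCLike.re_to_complex, ← integral_re hint2]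
    simp only [RCLike.re_to_complex]
    rw [← MeasureTheory.integral_indicator measurableSet_Ioo]
    congr 1
    ext v
    have hθ : -2 * π * v * (r / (2 * π)) = -(v * r) := by
      field_simp
    rw [smul_eq_mul, Complex.mul_re, hθ]
    simp only [Complex.ofReal_re, Complex.ofReal_im, mul_zero, sub_zero]
    rw [Complex.exp_ofReal_mul_I_re, Real.cos_neg]
    have : (F v : ℝ) * Real.cos (v * r) = (Ioo (0:ℝ) 1).indicator (fun y => w y * Real.cos (r * y)) v := by
      by_cases hv : v ∈ Ioo (0:ℝ) 1
      · simp [hF, indicator_of_mem hv, mul_comm v r]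
      · simp [hF, indicator_of_notMem hv]
    rw [← this]
    ring
  simpa only [key] using h2

lemma contAux (w : ℝ → ℝ) (hwint : IntegrableOn w (Ioo 0 1) volume) :
    Continuous (fun r : ℝ => ∫ y in Ioo (0:ℝ) 1, w y * Real.cos (r * y)) := by
  apply MeasureTheory.continuous_of_dominated (bound := fun y => |w y|)
  · intro r
    exact hwint.aestronglyMeasurable.mul
      ((Real.continuous_cos.comp (continuous_const.mul continuous_id)).aestronglyMeasurable)
  · intro r
    filter_upwards with y
    rw [Real.norm_eq_abs, abs_mul]
    calc |w y| * |Real.cos (r * y)| ≤ |w y| * 1 :=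
      mul_le_mul_of_nonneg_left (Real.abs_cos_le_one _) (abs_nonneg _)
    _ = |w y| := by ring
  · exact hwint.abs
  · filter_upwards with y
    exact continuous_const.mul (Real.continuous_cos.comp (continuous_id.mul continuous_const))

lemma posAux (h : ℝ → ℝ) (hint : IntegrableOn h (Ioo 0 1) volume)
    (hnn : ∀ y ∈ Ioo (0:ℝ) 1, 0 ≤ h y) (ε : ℝ) (hε : 0 < ε) (hε1 : ε ≤ 1)
    (hpos : ∀ y ∈ Ioo (0:ℝ) ε, 0 < h y) : 0 < ∫ y in Ioo (0:ℝ) 1, h y := by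
  have hnn' : 0 ≤ᵐ[volume.restrict (Ioo (0:ℝ) 1)] h := by
    filter_upwards [ae_restrict_mem measurableSet_Ioo] with y hy using hnn y hy
  rw [MeasureTheory.setIntegral_pos_iff_support_of_nonneg_ae hnn' hint]
  refine lt_of_lt_of_le ?_ (measure_mono (?_ : Ioo (0:ℝ) ε ⊆ _))
  · rw [Real.volume_Ioo]
    simpa using hε
  · intro y hy
    exact ⟨(hpos y hy).ne', hy.1, lt_of_lt_of_le hy.2 hε1⟩

end OneSubBessel

set_option maxHeartbeats 1000000 in
theorem one_sub_bessel_two_sided (α : ℝ) (hα : α > -1/2) (j : ℝ → ℝ)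
    (hj : ∀ r : ℝ, j r = (2 * Real.Gamma (α + 1) / (Real.sqrt Real.pi * Real.Gamma (α + 1/2))) *
      ∫ y in (0:ℝ)..1, (1 - y ^ 2) ^ (α - 1/2) * Real.cos (r * y)) :
    ∃ c₁ c₂ : ℝ, 0 < c₁ ∧ 0 < c₂ ∧ ∀ lam t : ℝ, 0 < lam → 0 < t →
      c₁ * min 1 ((lam * t) ^ 2) ≤ 1 - j (lam * t) ∧
      1 - j (lam * t) ≤ c₂ * min 1 ((lam * t) ^ 2) := by
  obtain ⟨hBint, hBval⟩ := OneSubBessel.betaAux α hα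
  obtain ⟨hwint, hwval⟩ := OneSubBessel.substAux α hBint
  set w : ℝ → ℝ := fun y => (1 - y ^ 2) ^ (α - 1/2) with hwdef
  obtain ⟨C, hCdef⟩ : ∃ c : ℝ, c = 2 * Real.Gamma (α + 1) / (Real.sqrt Real.pi * Real.Gamma (α + 1/2)) :=
    ⟨_, rfl⟩
  obtain ⟨I, hIdef⟩ : ∃ c : ℝ, c = ∫ y in Ioo (0:ℝ) 1, w y := ⟨_, rfl⟩
  have hπ : 0 < Real.sqrt Real.pi := Real.sqrt_pos.mpr Real.pi_pos
  have hΓ1 : 0 < Real.Gamma (α + 1) := Real.Gamma_pos_of_pos (by linarith)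
  have hΓ2 : 0 < Real.Gamma (α + 1/2) := Real.Gamma_pos_of_pos (by linarith)
  have hCpos : 0 < C := by
    rw [hCdef]
    positivity
  have hIval : I = Real.sqrt Real.pi * Real.Gamma (α + 1/2) / (2 * Real.Gamma (α + 1)) := by
    rw [hIdef]
    show (∫ y in Ioo (0:ℝ) 1, (1 - y ^ 2) ^ (α - 1/2)) = _
    rw [hwval, hBval]
    ring
  have hCI : C * I = 1 := by
    rw [hCdef, hIval, div_mul_div_comm, mul_comm (2 * Real.Gamma (α + 1))]
    exact div_self (ne_of_gt (mul_pos (mul_pos hπ hΓ2) (mul_pos two_pos hΓ1)))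
  have hwpos : ∀ y ∈ Ioo (0:ℝ) 1, 0 < w y := by
    intro y hy
    exact Real.rpow_pos_of_pos (by nlinarith [hy.1, hy.2]) _
  have hmeasI : MeasurableSet (Ioo (0:ℝ) 1) := measurableSet_Ioo
  have hgint : ∀ r : ℝ, IntegrableOn (fun y => w y * Real.cos (r * y)) (Ioo 0 1) volume := by
    intro r
    refine Integrable.mono' hwint.abs ?_ ?_
    · exact hwint.aestronglyMeasurable.mul
        ((Real.continuous_cos.comp (continuous_const.mul continuous_id)).aestronglyMeasurable)
    · filter_upwards with y
      rw [Real.norm_eq_abs, abs_mul]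
      calc |w y| * |Real.cos (r * y)| ≤ |w y| * 1 :=
        mul_le_mul_of_nonneg_left (Real.abs_cos_le_one _) (abs_nonneg _)
      _ = |w y| := by ring
  set g : ℝ → ℝ := fun r => ∫ y in Ioo (0:ℝ) 1, w y * Real.cos (r * y) with hgdef
  have hjr : ∀ r : ℝ, j r = C * g r := by
    intro r
    rw [hj r, intervalIntegral.integral_of_le (by norm_num : (0:ℝ) ≤ 1),
      MeasureTheory.integral_Ioc_eq_integral_Ioo, ← hCdef]
  have hsub : ∀ r : ℝ, 1 - j r = C * (I - g r) := by
    intro r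
    rw [hjr r, ← hCI]
    ring
  have hIg : ∀ r : ℝ, I - g r = ∫ y in Ioo (0:ℝ) 1, w y * (1 - Real.cos (r * y)) := by
    intro r
    rw [hIdef, hgdef, ← MeasureTheory.integral_sub hwint (hgint r)]
    refine MeasureTheory.setIntegral_congr_fun hmeasI (fun y _ => ?_)
    ring
  have hwcint : ∀ r : ℝ, IntegrableOn (fun y => w y * (1 - Real.cos (r * y))) (Ioo 0 1) volume := by
    intro r
    have hs2 : IntegrableOn (fun y => w y - w y * Real.cos (r * y)) (Ioo 0 1) volume :=
      hwint.sub (hgint r)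
    exact hs2.congr_fun (fun y _ => by ring) hmeasI
  have hwy2int : IntegrableOn (fun y => w y * y ^ 2) (Ioo 0 1) volume := by
    refine Integrable.mono' hwint.abs ?_ ?_
    · exact hwint.aestronglyMeasurable.mul
        ((continuous_pow 2).aestronglyMeasurable)
    · filter_upwards [ae_restrict_mem hmeasI] with y hy
      rw [Real.norm_eq_abs, abs_mul]
      calc |w y| * |y ^ 2| ≤ |w y| * 1 := by
            refine mul_le_mul_of_nonneg_left ?_ (abs_nonneg _)
            rw [abs_of_nonneg (sq_nonneg y)]
            nlinarith [hy.1, hy.2]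
      _ = |w y| := by ring
  obtain ⟨M, hMdef⟩ : ∃ c : ℝ, c = ∫ y in Ioo (0:ℝ) 1, w y * y ^ 2 := ⟨_, rfl⟩
  have hMpos : 0 < M := by
    rw [hMdef]
    refine OneSubBessel.posAux _ hwy2int (fun y hy => ?_) 1 one_pos le_rfl (fun y hy => ?_)
    · exact mul_nonneg (hwpos y hy).le (sq_nonneg y)
    · exact mul_pos (hwpos y hy) (pow_pos hy.1 2)
  have hIpos : 0 < I := by
    rw [hIdef]
    refine OneSubBessel.posAux _ hwint (fun y hy => (hwpos y hy).le) 1 one_pos le_rfl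
      (fun y hy => hwpos y hy)
  have hIgpos : ∀ r : ℝ, 0 < r → 0 < I - g r := by
    intro r hr
    rw [hIg r]
    have hπ3 : (3:ℝ) < π := Real.pi_gt_three
    set ε : ℝ := min 1 (π / r) with hε
    refine OneSubBessel.posAux _ (hwcint r) (fun y hy => ?_) ε ?_ (min_le_left _ _)
      (fun y hy => ?_)
    · have := Real.cos_le_one (r * y)
      have := (hwpos y hy).le
      nlinarith
    · exact lt_min one_pos (div_pos Real.pi_pos hr)
    · have hy1 : y ∈ Ioo (0:ℝ) 1 := ⟨hy.1, lt_of_lt_of_le hy.2 (min_le_left _ _)⟩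
      have hyπ : r * y < π := by
        have h2 : y < π / r := lt_of_lt_of_le hy.2 (min_le_right _ _)
        calc r * y < r * (π / r) := by exact mul_lt_mul_of_pos_left h2 hr
        _ = π := by field_simp
      have habs : |r * y| ≤ π := by
        rw [abs_of_pos (mul_pos hr hy.1)]
        exact hyπ.le
      have hcos := Real.cos_le_one_sub_mul_cos_sq habs
      have hlt : Real.cos (r * y) < 1 := by
        have hry : 0 < 2 / π ^ 2 * (r * y) ^ 2 :=
          mul_pos (by positivity) (pow_pos (mul_pos hr hy.1) 2)
        linarith
      exact mul_pos (hwpos y hy1) (by linarith)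
  have hcont : Continuous g := OneSubBessel.contAux w hwint
  have htend : Tendsto g atTop (𝓝 0) := OneSubBessel.rlAux w hwint
  obtain ⟨R₀, hR₀⟩ := (htend.eventually_lt_const (half_pos hIpos)).exists_forall_of_atTop
  set R : ℝ := max R₀ 1 with hR
  obtain ⟨r₀, hr₀K, hmin⟩ := (isCompact_Icc (a := (1:ℝ)) (b := R)).exists_isMinOn
    ⟨1, by constructor <;> simp [hR]⟩ ((continuous_const.sub hcont).continuousOn)
  set δ₁ : ℝ := I - g r₀ with hδ₁
  have hδ₁pos : 0 < δ₁ := hIgpos r₀ (lt_of_lt_of_le one_pos hr₀K.1)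
  set δ : ℝ := min δ₁ (I / 2) with hδ
  have hδpos : 0 < δ := lt_min hδ₁pos (half_pos hIpos)
  have hδbound : ∀ r : ℝ, 1 ≤ r → δ ≤ I - g r := by
    intro r hr
    rcases le_total r R with hrR | hrR
    · exact le_trans (min_le_left _ _) (hmin ⟨hr, hrR⟩)
    · have : g r < I / 2 := hR₀ r (le_trans (le_max_left _ _) hrR)
      exact le_trans (min_le_right _ _) (by linarith)
  clear_value w g R δ₁ δ
  have hsmall : ∀ r : ℝ, 0 < r → r ≤ 1 →
      (2 / π ^ 2) * M * r ^ 2 ≤ I - g r := by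
    intro r hr hr1
    rw [hIg r]
    have hπ3 : (3:ℝ) < π := Real.pi_gt_three
    have h1 : (2 / π ^ 2) * M * r ^ 2 =
        ∫ y in Ioo (0:ℝ) 1, (2 / π ^ 2 * r ^ 2) * (w y * y ^ 2) := by
      rw [MeasureTheory.integral_const_mul, hMdef]
      ring
    rw [h1]
    refine MeasureTheory.setIntegral_mono_on
      (hwy2int.const_mul _) (hwcint r) hmeasI (fun y hy => ?_)
    have habs : |r * y| ≤ π := by
      rw [abs_of_pos (mul_pos hr hy.1)]
      nlinarith [hy.1, hy.2]
    have hcos := Real.cos_le_one_sub_mul_cos_sq habs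
    have hwy := (hwpos y hy).le
    have hkey : 2 / π ^ 2 * (r * y) ^ 2 ≤ 1 - Real.cos (r * y) := by linarith
    calc 2 / π ^ 2 * r ^ 2 * (w y * y ^ 2) = w y * (2 / π ^ 2 * (r * y) ^ 2) := by ring
    _ ≤ w y * (1 - Real.cos (r * y)) := mul_le_mul_of_nonneg_left hkey hwy
  have hub2 : ∀ r : ℝ, 0 < r → I - g r ≤ 2 * I := by
    intro r hr
    rw [hIg r]
    have h2I : (2:ℝ) * I = ∫ y in Ioo (0:ℝ) 1, 2 * w y := by
      rw [MeasureTheory.integral_const_mul, hIdef]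
    rw [h2I]
    refine MeasureTheory.setIntegral_mono_on (hwcint r) (hwint.const_mul 2) hmeasI
      (fun y hy => ?_)
    have h1 := Real.neg_one_le_cos (r * y)
    have hwy := (hwpos y hy).le
    nlinarith
  have hubr : ∀ r : ℝ, 0 < r → I - g r ≤ (I / 2) * r ^ 2 := by
    intro r hr
    rw [hIg r]
    have hI2 : (I / 2) * r ^ 2 = ∫ y in Ioo (0:ℝ) 1, (r ^ 2 / 2) * w y := by
      rw [MeasureTheory.integral_const_mul, hIdef]
      ring
    rw [hI2]
    refine MeasureTheory.setIntegral_mono_on (hwcint r) (hwint.const_mul _) hmeasI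
      (fun y hy => ?_)
    have h1 : 1 - (r * y) ^ 2 / 2 ≤ Real.cos (r * y) := Real.one_sub_sq_div_two_le_cos
    have hwy := (hwpos y hy).le
    have hy2 : (r * y) ^ 2 ≤ r ^ 2 := by
      have hyy : y ^ 2 ≤ 1 := by nlinarith [hy.1.le, hy.2.le]
      calc (r * y) ^ 2 = r ^ 2 * y ^ 2 := by ring
      _ ≤ r ^ 2 * 1 := mul_le_mul_of_nonneg_left hyy (sq_nonneg r)
      _ = r ^ 2 := by ring
    nlinarith
  have hπ3 : (3:ℝ) < π := Real.pi_gt_three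
  refine ⟨min (C * ((2 / π ^ 2) * M)) (C * δ), 2 * C * I, ?_, ?_, ?_⟩
  · refine lt_min (mul_pos hCpos (mul_pos (by positivity) hMpos)) (mul_pos hCpos hδpos)
  · exact mul_pos (mul_pos two_pos hCpos) hIpos
  · intro lam t hlam ht
    set r : ℝ := lam * t with hr
    have hrpos : 0 < r := mul_pos hlam ht
    constructor
    · rcases le_total r 1 with h1 | h1
      · have hmin1 : min 1 (r ^ 2) = r ^ 2 := min_eq_right (by nlinarith)
        rw [hmin1, hsub r]
        calc min (C * ((2 / π ^ 2) * M)) (C * δ) * r ^ 2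
            ≤ (C * ((2 / π ^ 2) * M)) * r ^ 2 := by
              refine mul_le_mul_of_nonneg_right (min_le_left _ _) (sq_nonneg r)
        _ = C * ((2 / π ^ 2) * M * r ^ 2) := by ring
        _ ≤ C * (I - g r) := mul_le_mul_of_nonneg_left (hsmall r hrpos h1) hCpos.le
      · have hmin1 : min 1 (r ^ 2) = 1 := min_eq_left (by nlinarith)
        rw [hmin1, hsub r, mul_one]
        calc min (C * ((2 / π ^ 2) * M)) (C * δ) ≤ C * δ := min_le_right _ _
        _ ≤ C * (I - g r) := mul_le_mul_of_nonneg_left (hδbound r h1) hCpos.le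
    · rcases le_total r 1 with h1 | h1
      · have hmin1 : min 1 (r ^ 2) = r ^ 2 := min_eq_right (by nlinarith)
        rw [hmin1, hsub r]
        calc C * (I - g r) ≤ C * ((I / 2) * r ^ 2) :=
              mul_le_mul_of_nonneg_left (hubr r hrpos) hCpos.le
        _ ≤ C * (2 * I * r ^ 2) := by
              refine mul_le_mul_of_nonneg_left ?_ hCpos.le
              have : I / 2 ≤ 2 * I := by linarith
              exact mul_le_mul_of_nonneg_right this (sq_nonneg r)
        _ = 2 * C * I * r ^ 2 := by ring
      · have hmin1 : min 1 (r ^ 2) = 1 := min_eq_left (by nlinarith)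
        rw [hmin1, hsub r, mul_one]
        calc C * (I - g r) ≤ C * (2 * I) :=
              mul_le_mul_of_nonneg_left (hub2 r hrpos) hCpos.le
        _ = 2 * C * I := by ring
end

section
/- Let j_{1/2}(r) = sin(r)/r (with j_{1/2}(0)=1) and φ_λ(t) = sin(λt)/(λ sinh t). Then for complex λ = μ + iη with |η| ≤ 1 and all t > 0 and μ ∈ ℝ, |1 - φ_{μ+iη}(t)| ≥ (t/sinh t)·(1 - j_{1/2}(μt)). -/
open intervalIntegral Real

theorem hyperbolic_comparison (j : ℝ → ℝ)
    (hj0 : j 0 = 1) (hj : ∀ r : ℝ, r ≠ 0 → j r = Real.sin r / r) :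
    ∀ μ η t : ℝ, |η| ≤ 1 → 0 < t →
      ‖(1 - Complex.sin ((μ + η * Complex.I) * t) /
          ((μ + η * Complex.I) * (Real.sinh t : ℂ)))‖ ≥
        (t / Real.sinh t) * (1 - j (μ * t)) := by
  intro μ η t hη ht
  have hst : 0 < Real.sinh t := Real.sinh_pos_iff.mpr ht
  rcases eq_or_ne μ 0 with hμ | hμ
  · simp [hμ, hj0]
  · set lam : ℂ := (μ : ℂ) + (η : ℂ) * Complex.I with hlam
    have hlamne : lam ≠ 0 := by
      intro h
      have : lam.re = 0 := by rw [h]; simp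
      simp [hlam] at this
      exact hμ this
    -- FTC for complex cos
    have key : ∀ s : ℝ, HasDerivAt (fun u : ℝ => Complex.sin (lam * u) / lam)
        (Complex.cos (lam * s)) s := by
      intro s
      have h1 : HasDerivAt (fun z : ℂ => Complex.sin (lam * z) / lam)
          (Complex.cos (lam * s)) (s : ℂ) := by
        have := ((Complex.hasDerivAt_sin (lam * s)).comp _
          ((hasDerivAt_id (s : ℂ)).const_mul lam)).div_const lam
        simpa [Function.comp_def, mul_div_assoc, div_self hlamne] using this
      exact h1.comp_ofReal
    have hcont : Continuous fun s : ℝ => Complex.cos (lam * s) := by fun_prop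
    have hint : ∫ s in (0:ℝ)..t, Complex.cos (lam * s) = Complex.sin (lam * t) / lam := by
      rw [integral_eq_sub_of_hasDerivAt (fun s _ => key s)
        (hcont.intervalIntegrable 0 t)]
      simp
    -- real part of integrand
    have hre : ∀ s : ℝ, (Complex.cos (lam * s)).re = Real.cos (μ * s) * Real.cosh (η * s) := by
      intro s
      have : lam * s = (↑(μ * s) : ℂ) + (↑(η * s) : ℂ) * Complex.I := by
        rw [hlam]; push_cast; ring
      rw [this, Complex.cos_add_mul_I, ← Complex.ofReal_cos, ← Complex.ofReal_cosh,
        ← Complex.ofReal_sin, ← Complex.ofReal_sinh]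
      simp only [Complex.sub_re, Complex.mul_re, Complex.mul_im, Complex.ofReal_re,
        Complex.ofReal_im, Complex.I_re, Complex.I_im]
      ring
    -- re of integral
    have hreint : (∫ s in (0:ℝ)..t, Complex.cos (lam * s)).re
        = ∫ s in (0:ℝ)..t, Real.cos (μ * s) * Real.cosh (η * s) := by
      have h2 := Complex.reCLM.intervalIntegral_comp_comm (μ := MeasureTheory.volume) (hcont.intervalIntegrable 0 t)
      simp only [Complex.reCLM_apply] at h2
      rw [← h2]
      exact intervalIntegral.integral_congr fun s _ => hre s
    -- FTC for sinh and sin(μ s)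
    have hsinh : ∫ s in (0:ℝ)..t, Real.cosh s = Real.sinh t := by
      rw [integral_eq_sub_of_hasDerivAt (fun s _ => Real.hasDerivAt_sinh s)
        ((Real.continuous_cosh).intervalIntegrable 0 t)]
      simp
    have hsin : ∫ s in (0:ℝ)..t, Real.cos (μ * s) = Real.sin (μ * t) / μ := by
      have key2 : ∀ s : ℝ, HasDerivAt (fun u : ℝ => Real.sin (μ * u) / μ)
          (Real.cos (μ * s)) s := by
        intro s
        have := ((Real.hasDerivAt_sin (μ * s)).comp _
            ((hasDerivAt_id s).const_mul μ)).div_const μ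
        simpa [Function.comp_def, mul_div_assoc, div_self hμ] using this
      rw [integral_eq_sub_of_hasDerivAt (fun s _ => key2 s)
        ((Real.continuous_cos.comp (continuous_const.mul continuous_id)).intervalIntegrable 0 t)]
      simp
    -- comparison of integrals
    have hmono : ∫ s in (0:ℝ)..t, (1 - Real.cos (μ * s))
        ≤ ∫ s in (0:ℝ)..t, (Real.cosh s - Real.cos (μ * s) * Real.cosh (η * s)) := by
      apply intervalIntegral.integral_mono_on ht.le
      · apply Continuous.intervalIntegrable; fun_prop
      · apply Continuous.intervalIntegrable; fun_prop
      · intro s hs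
        have hs0 : 0 ≤ s := hs.1
        have hch : Real.cosh (η * s) ≤ Real.cosh s := by
          rw [Real.cosh_le_cosh, abs_mul, abs_of_nonneg hs0]
          calc |η| * s ≤ 1 * s := mul_le_mul_of_nonneg_right hη hs0
            _ = s := one_mul s
        nlinarith [Real.cos_le_one (μ * s), Real.neg_one_le_cos (μ * s),
          Real.one_le_cosh (η * s), Real.one_le_cosh s]
    -- rewrite integrals
    rw [intervalIntegral.integral_sub (by apply Continuous.intervalIntegrable; fun_prop)
        (by apply Continuous.intervalIntegrable; fun_prop),
      intervalIntegral.integral_sub (by apply Continuous.intervalIntegrable; fun_prop)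
        (by apply Continuous.intervalIntegrable; fun_prop),
      hsinh, hsin] at hmono
    simp only [intervalIntegral.integral_const, smul_eq_mul, mul_one, sub_zero] at hmono
    -- key real-part bound
    have hA : (Complex.sin (lam * t) / lam).re = ∫ s in (0:ℝ)..t,
        Real.cos (μ * s) * Real.cosh (η * s) := by rw [← hint, hreint]
    set A : ℝ := ∫ s in (0:ℝ)..t, Real.cos (μ * s) * Real.cosh (η * s) with hAdef
    have hAle : Real.sinh t - A ≥ t - Real.sin (μ * t) / μ := hmono
    -- final assembly
    have hphi : (Complex.sin (lam * t) / (lam * (Real.sinh t : ℂ))).re = A / Real.sinh t := by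
      rw [show lam * (Real.sinh t : ℂ) = lam * ((Real.sinh t : ℝ) : ℂ) from rfl,
        ← div_div, Complex.div_ofReal_re, hA]
    have hble : (t / Real.sinh t) * (1 - j (μ * t))
        ≤ (1 - Complex.sin (lam * t) / (lam * (Real.sinh t : ℂ))).re := by
      have hμt : μ * t ≠ 0 := mul_ne_zero hμ (ne_of_gt ht)
      rw [hj _ hμt, Complex.sub_re, Complex.one_re, hphi]
      rw [show (t / Real.sinh t) * (1 - Real.sin (μ * t) / (μ * t))
          = (t - Real.sin (μ * t) / μ) / Real.sinh t by
        field_simp]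
      rw [show (1 : ℝ) - A / Real.sinh t = (Real.sinh t - A) / Real.sinh t by
        field_simp]
      gcongr
    calc (t / Real.sinh t) * (1 - j (μ * t))
        ≤ (1 - Complex.sin (lam * t) / (lam * (Real.sinh t : ℂ))).re := hble
      _ ≤ ‖(1 - Complex.sin (lam * t) / (lam * (Real.sinh t : ℂ)))‖ :=
          Complex.re_le_norm _
end

section
/- Let f ∈ L¹(ℝⁿ), n ≥ 2. Then there is C = C(n) > 0 such that for all t > 0: sup_{|ξ| > 1/t} |f̂(ξ)| ≤ C·‖M^t f - f‖₁ (a quantified Riemann–Lebesgue lemma). -/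
open MeasureTheory FourierTransform

/-- The spherical mean of `f` over the sphere of radius `t` centered at `x`,
with respect to the normalized surface measure on the unit sphere. -/
noncomputable def sphericalMean (n : ℕ) (f : EuclideanSpace ℝ (Fin n) → ℂ) (t : ℝ)
    (x : EuclideanSpace ℝ (Fin n)) : ℂ :=
  (((volume : Measure (EuclideanSpace ℝ (Fin n))).toSphere Set.univ).toReal)⁻¹ •
    ∫ ω : Metric.sphere (0 : EuclideanSpace ℝ (Fin n)) 1,
      f (x + t • (ω : EuclideanSpace ℝ (Fin n)))
      ∂(volume : Measure (EuclideanSpace ℝ (Fin n))).toSphere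

noncomputable section

namespace QRLaux

open Metric Set Filter Real
open scoped ENNReal RealInnerProductSpace Topology

abbrev Eu (n : ℕ) := EuclideanSpace ℝ (Fin n)
abbrev Sph (n : ℕ) := Metric.sphere (0 : Eu n) 1

/-- Fiber lemma: preimage of a null set under `a ↦ a/√(a²+ρ²)` is null. -/
lemma fiber_null {ρ : ℝ} (hρ : 0 < ρ) {N : Set ℝ} (hN : volume N = 0) :
    volume {a : ℝ | a / Real.sqrt (a ^ 2 + ρ ^ 2) ∈ N} = 0 := by
  have hset : {a : ℝ | a / Real.sqrt (a ^ 2 + ρ ^ 2) ∈ N}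
      = (fun s : ℝ => ρ * s / Real.sqrt (1 - s ^ 2)) '' (N ∩ Ioo (-1 : ℝ) 1) := by
    ext a
    simp only [mem_setOf_eq, mem_image, mem_inter_iff, mem_Ioo]
    constructor
    · intro ha
      have hpos : (0:ℝ) < a ^ 2 + ρ ^ 2 := by positivity
      set r := Real.sqrt (a ^ 2 + ρ ^ 2) with hr
      have hrpos : 0 < r := Real.sqrt_pos.2 hpos
      have hr2 : r ^ 2 = a ^ 2 + ρ ^ 2 := Real.sq_sqrt hpos.le
      have habs : |a| < r := by
        rw [← Real.sqrt_sq_eq_abs]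
        exact Real.sqrt_lt_sqrt (sq_nonneg a) (by nlinarith)
      obtain ⟨habs1, habs2⟩ := abs_lt.1 habs
      refine ⟨a / r, ⟨ha, ?_, ?_⟩, ?_⟩
      · rw [neg_lt, ← neg_div]
        exact (div_lt_one hrpos).2 (by linarith)
      · exact (div_lt_one hrpos).2 (by linarith)
      · have h1 : 1 - (a / r) ^ 2 = (ρ / r) ^ 2 := by
          field_simp
          try nlinarith
        rw [h1, Real.sqrt_sq (by positivity)]
        field_simp
        try ring
    · rintro ⟨s, ⟨hsN, hs1, hs2⟩, rfl⟩
      have h1 : (0:ℝ) < 1 - s ^ 2 := by nlinarith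
      set u := Real.sqrt (1 - s ^ 2) with hu
      have hupos : 0 < u := Real.sqrt_pos.2 h1
      have hu2 : u ^ 2 = 1 - s ^ 2 := Real.sq_sqrt h1.le
      have h2 : (ρ * s / u) ^ 2 + ρ ^ 2 = (ρ / u) ^ 2 := by
        field_simp
        try nlinarith
      rw [h2, Real.sqrt_sq (by positivity)]
      have : ρ * s / u / (ρ / u) = s := by
        field_simp
        try ring
      rw [this]
      exact hsN
  rw [hset]
  refine addHaar_image_eq_zero_of_differentiableOn_of_addHaar_eq_zero (volume : Measure ℝ) ?_ ?_
  · intro s hs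
    have h1 : (0:ℝ) < 1 - s ^ 2 := by nlinarith [hs.2.1, hs.2.2]
    apply DifferentiableAt.differentiableWithinAt
    apply DifferentiableAt.div (by fun_prop)
    · exact DifferentiableAt.sqrt (by fun_prop) h1.ne'
    · exact (Real.sqrt_pos.2 h1).ne'
  · exact measure_mono_null inter_subset_left hN

/-- On the pi-space, the "null cone direction" set is null. -/
lemma pi_null {m : ℕ} (hm : 0 < m) {N : Set ℝ} (hNm : MeasurableSet N) (hN : volume N = 0) :
    (volume : Measure (Fin (m + 1) → ℝ))
      {y | y ≠ 0 ∧ (Real.sqrt (∑ i, y i ^ 2))⁻¹ * y 0 ∈ N} = 0 := by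
  classical
  -- the set on `(Fin m → ℝ) × ℝ`
  set q : (Fin m → ℝ) × ℝ → ℝ := fun p => (Real.sqrt (p.2 ^ 2 + ∑ j, p.1 j ^ 2))⁻¹ * p.2 with hq
  have hqm : Measurable q := by
    apply Measurable.mul
    · exact (Real.continuous_sqrt.measurable.comp (by fun_prop)).inv
    · fun_prop
  have hU3eq : {p : (Fin m → ℝ) × ℝ | p ≠ 0 ∧ q p ∈ N}
      = {(0 : (Fin m → ℝ) × ℝ)}ᶜ ∩ q ⁻¹' N := by
    ext p; simp [mem_setOf_eq]
  have hU3m : MeasurableSet {p : (Fin m → ℝ) × ℝ | p ≠ 0 ∧ q p ∈ N} := by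
    rw [hU3eq]
    exact (measurableSet_singleton 0).compl.inter (hqm hNm)
  have hz : (volume : Measure (Fin m → ℝ)) {(0 : Fin m → ℝ)} = 0 := by
    have h0 : ({(0 : Fin m → ℝ)} : Set (Fin m → ℝ)) = Set.pi univ (fun _ => {(0:ℝ)}) := by
      ext y; simp [funext_iff]
    rw [h0, volume_pi_pi]
    simp only [Real.volume_singleton]
    exact Finset.prod_eq_zero (Finset.mem_univ (⟨0, hm⟩ : Fin m)) rfl
  have hU3 : ((volume : Measure (Fin m → ℝ)).prod (volume : Measure ℝ))
      {p : (Fin m → ℝ) × ℝ | p ≠ 0 ∧ q p ∈ N} = 0 := by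
    rw [Measure.measure_prod_null hU3m]
    have hzae : ∀ᵐ z : Fin m → ℝ, z ≠ 0 := by
      rw [ae_iff]
      simpa using hz
    filter_upwards [hzae] with z hz0
    simp only [Pi.zero_apply]
    have hρ : 0 < Real.sqrt (∑ j, z j ^ 2) := by
      apply Real.sqrt_pos.2
      rcases Function.ne_iff.1 hz0 with ⟨j, hj⟩
      have : 0 < z j ^ 2 := pow_two_pos_of_ne_zero hj
      have hle : z j ^ 2 ≤ ∑ j, z j ^ 2 :=
        Finset.single_le_sum (f := fun j => z j ^ 2) (fun i _ => sq_nonneg _) (Finset.mem_univ j)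
      linarith
    have hsec : (Prod.mk z ⁻¹' {p : (Fin m → ℝ) × ℝ | p ≠ 0 ∧ q p ∈ N})
        = {a : ℝ | a / Real.sqrt (a ^ 2 + (Real.sqrt (∑ j, z j ^ 2)) ^ 2) ∈ N} := by
      ext a
      have hne : (z, a) ≠ 0 := by
        simp only [ne_eq, Prod.mk_eq_zero, not_and_or]
        exact Or.inl hz0
      simp only [mem_preimage, mem_setOf_eq, hq]
      rw [Real.sq_sqrt (by positivity)]
      simp [hne, inv_mul_eq_div]
    rw [hsec]
    exact fiber_null hρ hN
  -- transfer to `ℝ × (Fin m → ℝ)`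
  have hU2m : MeasurableSet {p : ℝ × (Fin m → ℝ) |
      p ≠ 0 ∧ (Real.sqrt (p.1 ^ 2 + ∑ j, p.2 j ^ 2))⁻¹ * p.1 ∈ N} := by
    have : {p : ℝ × (Fin m → ℝ) | p ≠ 0 ∧ (Real.sqrt (p.1 ^ 2 + ∑ j, p.2 j ^ 2))⁻¹ * p.1 ∈ N}
        = Prod.swap ⁻¹' {p : (Fin m → ℝ) × ℝ | p ≠ 0 ∧ q p ∈ N} := by
      ext p
      simp only [mem_preimage, mem_setOf_eq, Prod.swap, hq]
      constructor
      · rintro ⟨h1, h2⟩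
        exact ⟨by simpa [Prod.ext_iff, and_comm] using h1, h2⟩
      · rintro ⟨h1, h2⟩
        exact ⟨by simpa [Prod.ext_iff, and_comm] using h1, h2⟩
    rw [this]
    exact measurable_swap hU3m
  have hU2 : ((volume : Measure ℝ).prod (volume : Measure (Fin m → ℝ)))
      {p : ℝ × (Fin m → ℝ) | p ≠ 0 ∧ (Real.sqrt (p.1 ^ 2 + ∑ j, p.2 j ^ 2))⁻¹ * p.1 ∈ N} = 0 := by
    have hsw : {p : ℝ × (Fin m → ℝ) | p ≠ 0 ∧ (Real.sqrt (p.1 ^ 2 + ∑ j, p.2 j ^ 2))⁻¹ * p.1 ∈ N}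
        = Prod.swap ⁻¹' {p : (Fin m → ℝ) × ℝ | p ≠ 0 ∧ q p ∈ N} := by
      ext p
      simp only [mem_preimage, mem_setOf_eq, Prod.swap, hq]
      constructor
      · rintro ⟨h1, h2⟩
        exact ⟨by simpa [Prod.ext_iff, and_comm] using h1, h2⟩
      · rintro ⟨h1, h2⟩
        exact ⟨by simpa [Prod.ext_iff, and_comm] using h1, h2⟩
    rw [hsw, (Measure.measurePreserving_swap).measure_preimage hU3m.nullMeasurableSet]
    exact hU3
  -- transfer to the pi space
  have hmp := volume_preserving_piFinSuccAbove (fun _ : Fin (m + 1) => ℝ) 0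
  have hseteq : {y : Fin (m + 1) → ℝ | y ≠ 0 ∧ (Real.sqrt (∑ i, y i ^ 2))⁻¹ * y 0 ∈ N}
      = (MeasurableEquiv.piFinSuccAbove (fun _ : Fin (m + 1) => ℝ) 0) ⁻¹'
        {p : ℝ × (Fin m → ℝ) | p ≠ 0 ∧ (Real.sqrt (p.1 ^ 2 + ∑ j, p.2 j ^ 2))⁻¹ * p.1 ∈ N} := by
    ext y
    have hsum : ∑ i, y i ^ 2 = y 0 ^ 2 + ∑ j, y ((0 : Fin (m+1)).succAbove j) ^ 2 :=
      Fin.sum_univ_succAbove (fun i => y i ^ 2) 0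
    have happ : (MeasurableEquiv.piFinSuccAbove (fun _ : Fin (m + 1) => ℝ) 0) y
        = (y 0, fun j => y ((0 : Fin (m+1)).succAbove j)) := rfl
    simp only [mem_preimage, mem_setOf_eq, happ, hsum]
    have hne : (y 0, fun j => y ((0 : Fin (m+1)).succAbove j)) ≠ (0 : ℝ × (Fin m → ℝ)) ↔ y ≠ 0 := by
      rw [not_iff_not]
      constructor
      · intro h
        funext i
        have h1 : y 0 = 0 := congrArg Prod.fst h
        have h2 : (fun j => y ((0 : Fin (m+1)).succAbove j)) = (0 : Fin m → ℝ) :=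
          congrArg Prod.snd h
        induction i using Fin.cases with
        | zero => exact h1
        | succ j =>
          have := congrFun h2 j
          simpa [Fin.succAbove_zero] using this
      · intro h
        subst h
        rfl
    rw [hne]
  rw [hseteq, hmp.measure_preimage hU2m.nullMeasurableSet, Measure.volume_eq_prod]
  exact hU2

/-- On Euclidean space: the cone over a null "latitude" set is null (general direction). -/
lemma eu_null {n : ℕ} (hn : 2 ≤ n) (e : Eu n) (he : ‖e‖ = 1) {N : Set ℝ}
    (hNm : MeasurableSet N) (hN : volume N = 0) :
    volume {x : Eu n | x ≠ 0 ∧ ‖x‖⁻¹ * ⟪e, x⟫ ∈ N} = 0 := by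
  obtain ⟨m, rfl⟩ : ∃ m, n = m + 1 := ⟨n - 1, by omega⟩
  have hm : 0 < m := by omega
  set e₁ : Eu (m+1) := EuclideanSpace.single 0 1 with he₁
  have hne₁ : ‖e₁‖ = 1 := by
    rw [he₁, EuclideanSpace.norm_single]
    norm_num
  -- the e₁ case
  have base : volume {x : Eu (m+1) | x ≠ 0 ∧ ‖x‖⁻¹ * ⟪e₁, x⟫ ∈ N} = 0 := by
    have hmp := EuclideanSpace.volume_preserving_symm_measurableEquiv_toLp (Fin (m+1))
    have hUm : MeasurableSet {y : Fin (m+1) → ℝ | y ≠ 0 ∧ (Real.sqrt (∑ i, y i ^ 2))⁻¹ * y 0 ∈ N} := by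
      have : {y : Fin (m+1) → ℝ | y ≠ 0 ∧ (Real.sqrt (∑ i, y i ^ 2))⁻¹ * y 0 ∈ N}
          = {(0 : Fin (m+1) → ℝ)}ᶜ ∩ (fun y : Fin (m+1) → ℝ =>
              (Real.sqrt (∑ i, y i ^ 2))⁻¹ * y 0) ⁻¹' N := by
        ext y; simp [mem_setOf_eq]
      rw [this]
      refine (measurableSet_singleton 0).compl.inter (Measurable.mul ?_ (by fun_prop) hNm)
      exact (Real.continuous_sqrt.measurable.comp (by fun_prop)).inv
    have hset : {x : Eu (m+1) | x ≠ 0 ∧ ‖x‖⁻¹ * ⟪e₁, x⟫ ∈ N}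
        = (MeasurableEquiv.toLp 2 (Fin (m+1) → ℝ)).symm ⁻¹'
          {y : Fin (m+1) → ℝ | y ≠ 0 ∧ (Real.sqrt (∑ i, y i ^ 2))⁻¹ * y 0 ∈ N} := by
      ext x
      have hcoe : ∀ i, (MeasurableEquiv.toLp 2 (Fin (m+1) → ℝ)).symm x i = x i := fun i => rfl
      have hnorm : ‖x‖ = Real.sqrt (∑ i, x i ^ 2) := by
        rw [EuclideanSpace.norm_eq]
        congr 1
        refine Finset.sum_congr rfl fun i _ => ?_
        rw [Real.norm_eq_abs, sq_abs]
      have hinner : ⟪e₁, x⟫ = x 0 := by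
        rw [he₁]
        simp [EuclideanSpace.inner_single_left]
      have hzero : (MeasurableEquiv.toLp 2 (Fin (m+1) → ℝ)).symm x = 0 ↔ x = 0 := by
        constructor
        · intro h
          ext i
          exact congrFun h i
        · intro h
          rw [h]
          rfl
      simp only [mem_preimage, mem_setOf_eq, hcoe, hnorm, hinner]
      constructor
      · rintro ⟨h1, h2⟩
        exact ⟨fun hh => h1 (hzero.1 hh), h2⟩
      · rintro ⟨h1, h2⟩
        exact ⟨fun hh => h1 (hzero.2 hh), h2⟩
    rw [hset, hmp.measure_preimage hUm.nullMeasurableSet]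
    exact pi_null hm hNm hN
  -- reduce to e₁ via a reflection
  set K := (ℝ ∙ (e₁ - e))ᗮ with hK
  set A := Submodule.reflection K with hA
  have hAe : A e₁ = e := Submodule.reflection_sub (hne₁.trans he.symm)
  have hVm : MeasurableSet {x : Eu (m+1) | x ≠ 0 ∧ ‖x‖⁻¹ * ⟪e, x⟫ ∈ N} := by
    have : {x : Eu (m+1) | x ≠ 0 ∧ ‖x‖⁻¹ * ⟪e, x⟫ ∈ N}
        = {(0 : Eu (m+1))}ᶜ ∩ (fun x : Eu (m+1) => ‖x‖⁻¹ * ⟪e, x⟫) ⁻¹' N := by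
      ext x; simp [mem_setOf_eq]
    rw [this]
    refine (measurableSet_singleton 0).compl.inter (Measurable.mul ?_ ?_ hNm)
    · exact (continuous_norm.measurable).inv
    · exact (Continuous.inner continuous_const continuous_id).measurable
  have hpre : (A : Eu (m+1) → Eu (m+1)) ⁻¹' {x : Eu (m+1) | x ≠ 0 ∧ ‖x‖⁻¹ * ⟪e, x⟫ ∈ N}
      = {x : Eu (m+1) | x ≠ 0 ∧ ‖x‖⁻¹ * ⟪e₁, x⟫ ∈ N} := by
    ext x
    simp only [mem_preimage, mem_setOf_eq]
    rw [A.norm_map, ← hAe, A.inner_map_map]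
    constructor
    · rintro ⟨h1, h2⟩
      exact ⟨fun h => h1 (by rw [h, map_zero]), h2⟩
    · rintro ⟨h1, h2⟩
      refine ⟨fun h => h1 ?_, h2⟩
      have := congrArg A.symm h
      simpa using this
  have := A.measurePreserving.measure_preimage hVm.nullMeasurableSet
  rw [hpre] at this
  rw [← this]
  exact base

/-- Polar-coordinates formula for the sphere measure of a "latitude" set. -/
lemma sph_slab {n : ℕ} (hn : 2 ≤ n) (e : Eu n) {S : Set ℝ} (hS : MeasurableSet S) :
    (volume : Measure (Eu n)).toSphere {ω : Sph n | ⟪e, (ω : Eu n)⟫ ∈ S}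
        * ENNReal.ofReal (1 / n)
      = volume {x : Eu n | x ≠ 0 ∧ ‖x‖ < 1 ∧ ‖x‖⁻¹ * ⟪e, x⟫ ∈ S} := by
  have hdim : Module.finrank ℝ (Eu n) = n := finrank_euclideanSpace_fin
  have hTm : MeasurableSet {ω : Sph n | ⟪e, (ω : Eu n)⟫ ∈ S} :=
    (Continuous.inner continuous_const continuous_subtype_val).measurable hS
  have hBm : MeasurableSet (Iio (⟨1, mem_Ioi.2 one_pos⟩ : Ioi (0:ℝ))) := measurableSet_Iio
  have MP := (volume : Measure (Eu n)).measurePreserving_homeomorphUnitSphereProd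
  have key := MP.measure_preimage ((hTm.prod hBm).nullMeasurableSet)
  rw [Measure.prod_prod] at key
  have hB : Measure.volumeIoiPow (Module.finrank ℝ (Eu n) - 1)
      (Iio (⟨1, mem_Ioi.2 one_pos⟩ : Ioi (0:ℝ))) = ENNReal.ofReal (1 / n) := by
    rw [Measure.volumeIoiPow_apply_Iio]
    rw [hdim]
    congr 1
    have h0 : 1 ≤ n := by omega
    have h1 : ((n - 1 : ℕ) : ℝ) + 1 = (n : ℝ) := by
      rw [Nat.cast_sub h0]
      ring
    rw [one_pow, h1]
  rw [hB] at key
  rw [comap_subtype_coe_apply (measurableSet_singleton (0 : Eu n)).compl] at key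
  have himg : (Subtype.val '' ((homeomorphUnitSphereProd (Eu n)) ⁻¹'
      ({ω : Sph n | ⟪e, (ω : Eu n)⟫ ∈ S} ×ˢ Iio (⟨1, mem_Ioi.2 one_pos⟩ : Ioi (0:ℝ)))))
      = {x : Eu n | x ≠ 0 ∧ ‖x‖ < 1 ∧ ‖x‖⁻¹ * ⟪e, x⟫ ∈ S} := by
    ext x
    constructor
    · rintro ⟨⟨x, hx0⟩, hx, rfl⟩
      simp only [mem_preimage, mem_prod, mem_setOf_eq, mem_Iio] at hx
      obtain ⟨hx1, hx2⟩ := hx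
      have hx0' : x ≠ 0 := hx0
      refine ⟨hx0', ?_, ?_⟩
      · simpa using Subtype.coe_lt_coe.2 hx2
      · have : ⟪e, ‖x‖⁻¹ • x⟫ ∈ S := by simpa using hx1
        rwa [real_inner_smul_right] at this
    · rintro ⟨hx0, hlt, hmem⟩
      refine ⟨⟨x, hx0⟩, ?_, rfl⟩
      simp only [mem_preimage, mem_prod, mem_setOf_eq, mem_Iio]
      constructor
      · simp only [homeomorphUnitSphereProd_apply_fst_coe]
        rwa [real_inner_smul_right]
      · exact Subtype.coe_lt_coe.1 (by simpa using hlt)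
  rw [himg] at key
  exact key.symm

/-- Rotation invariance of latitude measures on the sphere. -/
lemma sph_map_eq {n : ℕ} (hn : 2 ≤ n) (e e' : Eu n) (he : ‖e‖ = 1) (he' : ‖e'‖ = 1)
    {S : Set ℝ} (hS : MeasurableSet S) :
    (volume : Measure (Eu n)).toSphere {ω : Sph n | ⟪e, (ω : Eu n)⟫ ∈ S}
      = (volume : Measure (Eu n)).toSphere {ω : Sph n | ⟪e', (ω : Eu n)⟫ ∈ S} := by
  have hvol : volume {x : Eu n | x ≠ 0 ∧ ‖x‖ < 1 ∧ ‖x‖⁻¹ * ⟪e, x⟫ ∈ S}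
      = volume {x : Eu n | x ≠ 0 ∧ ‖x‖ < 1 ∧ ‖x‖⁻¹ * ⟪e', x⟫ ∈ S} := by
    set A := Submodule.reflection (ℝ ∙ (e' - e))ᗮ with hA
    have hAe : A e' = e := Submodule.reflection_sub (he'.trans he.symm)
    have hVm : MeasurableSet {x : Eu n | x ≠ 0 ∧ ‖x‖ < 1 ∧ ‖x‖⁻¹ * ⟪e, x⟫ ∈ S} := by
      have : {x : Eu n | x ≠ 0 ∧ ‖x‖ < 1 ∧ ‖x‖⁻¹ * ⟪e, x⟫ ∈ S}
          = ({(0 : Eu n)}ᶜ ∩ (fun x : Eu n => ‖x‖) ⁻¹' Iio 1) ∩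
            (fun x : Eu n => ‖x‖⁻¹ * ⟪e, x⟫) ⁻¹' S := by
        ext x; simp [mem_setOf_eq, and_assoc]
      rw [this]
      refine MeasurableSet.inter (MeasurableSet.inter (measurableSet_singleton 0).compl
        (continuous_norm.measurable measurableSet_Iio)) (Measurable.mul ?_ ?_ hS)
      · exact (continuous_norm.measurable).inv
      · exact (Continuous.inner continuous_const continuous_id).measurable
    have hpre : (A : Eu n → Eu n) ⁻¹' {x : Eu n | x ≠ 0 ∧ ‖x‖ < 1 ∧ ‖x‖⁻¹ * ⟪e, x⟫ ∈ S}
        = {x : Eu n | x ≠ 0 ∧ ‖x‖ < 1 ∧ ‖x‖⁻¹ * ⟪e', x⟫ ∈ S} := by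
      ext x
      simp only [mem_preimage, mem_setOf_eq]
      rw [A.norm_map, ← hAe, A.inner_map_map]
      constructor
      · rintro ⟨h1, h2, h3⟩
        exact ⟨fun h => h1 (by rw [h, map_zero]), h2, h3⟩
      · rintro ⟨h1, h2, h3⟩
        refine ⟨fun h => h1 ?_, h2, h3⟩
        have := congrArg A.symm h
        simpa using this
    have := A.measurePreserving.measure_preimage hVm.nullMeasurableSet
    rw [hpre] at this
    exact this.symm
  have h1 := sph_slab hn e hS
  have h2 := sph_slab hn e' hS
  rw [hvol, ← h2] at h1
  have hc0 : ENNReal.ofReal (1 / n) ≠ 0 := by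
    refine (ENNReal.ofReal_pos.2 ?_).ne'
    have : 0 < n := by omega
    positivity
  have hct : ENNReal.ofReal (1 / n) ≠ ∞ := ENNReal.ofReal_ne_top
  have hq1 : ENNReal.ofReal (1 / n) * (ENNReal.ofReal (1 / n))⁻¹ = 1 :=
    ENNReal.mul_inv_cancel hc0 hct
  have h5 := congrArg (fun z => z * (ENNReal.ofReal (1 / n))⁻¹) h1
  simp only [mul_assoc, hq1, mul_one] at h5
  exact h5

/-- Null latitude sets have null sphere measure. -/
lemma sph_null {n : ℕ} (hn : 2 ≤ n) (e : Eu n) (he : ‖e‖ = 1) {N : Set ℝ}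
    (hNm : MeasurableSet N) (hN : volume N = 0) :
    (volume : Measure (Eu n)).toSphere {ω : Sph n | ⟪e, (ω : Eu n)⟫ ∈ N} = 0 := by
  have h1 := sph_slab hn e hNm
  have h2 : volume {x : Eu n | x ≠ 0 ∧ ‖x‖ < 1 ∧ ‖x‖⁻¹ * ⟪e, x⟫ ∈ N} = 0 := by
    refine measure_mono_null (fun x hx => ?_) (eu_null hn e he hNm hN)
    exact ⟨hx.1, hx.2.2⟩
  rw [h2] at h1
  rcases mul_eq_zero.1 h1 with h | h
  · exact h
  · exact absurd h (by
      refine (ENNReal.ofReal_pos.2 ?_).ne'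
      have : 0 < n := by omega
      positivity)

lemma sigma_univ_pos {n : ℕ} (hn : 2 ≤ n) :
    0 < (volume : Measure (Eu n)).toSphere Set.univ ∧
      (volume : Measure (Eu n)).toSphere Set.univ ≠ ∞ := by
  haveI : Nontrivial (Eu n) :=
    Module.nontrivial_of_finrank_pos (R := ℝ) (by rw [finrank_euclideanSpace_fin]; omega)
  constructor
  · rw [Measure.toSphere_apply_univ]
    refine ENNReal.mul_pos ?_ ?_
    · simp [finrank_euclideanSpace_fin]
      omega
    · exact (measure_ball_pos volume 0 one_pos).ne'
  · exact measure_ne_top _ _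

/-- Uniform smallness of latitude sets of small Lebesgue measure. -/
lemma small_slab (n : ℕ) (hn : 2 ≤ n) :
    ∃ δ : ℝ, 0 < δ ∧ ∀ S : Set ℝ, MeasurableSet S → volume S < ENNReal.ofReal δ →
      ∀ e : Eu n, ‖e‖ = 1 →
        (volume : Measure (Eu n)).toSphere {ω : Sph n | ⟪e, (ω : Eu n)⟫ ∈ S}
          < (volume : Measure (Eu n)).toSphere Set.univ / 2 := by
  obtain ⟨hσ0, hσt⟩ := sigma_univ_pos (n := n) hn
  set σ := (volume : Measure (Eu n)).toSphere with hσ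
  have hhalfpos : 0 < σ Set.univ / 2 := ENNReal.div_pos hσ0.ne' (by norm_num)
  -- fixed reference direction
  set e₀ : Eu n := EuclideanSpace.single (⟨0, by omega⟩ : Fin n) 1 with he₀
  have hne₀ : ‖e₀‖ = 1 := by rw [he₀, EuclideanSpace.norm_single]; norm_num
  by_contra hcon
  push_neg at hcon
  have H : ∀ δ : ℝ, 0 < δ → ∃ S : Set ℝ, MeasurableSet S ∧ volume S < ENNReal.ofReal δ ∧
      σ Set.univ / 2 ≤ σ {ω : Sph n | ⟪e₀, (ω : Eu n)⟫ ∈ S} := by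
    intro δ hδ
    obtain ⟨S, hSm, hSv, e, he, hge⟩ := hcon δ hδ
    exact ⟨S, hSm, hSv, by rwa [sph_map_eq hn e₀ e hne₀ he hSm]⟩
  choose S hSm hSv hSge using fun k : ℕ => H ((1/2) ^ k) (by positivity)
  set W : ℕ → Set ℝ := fun m => ⋃ k : ℕ, S (m + k) with hW
  have hWm : ∀ m, MeasurableSet (W m) := fun m => MeasurableSet.iUnion fun k => hSm _
  have hWanti : Antitone W := by
    refine antitone_nat_of_succ_le fun m => ?_
    rintro x hx
    rcases mem_iUnion.1 hx with ⟨k, hk⟩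
    exact mem_iUnion.2 ⟨k + 1, by rwa [show m + (k + 1) = m + 1 + k by omega]⟩
  have hvolW : ∀ m, volume (W m) ≤ (2⁻¹ : ℝ≥0∞) ^ m * 2 := by
    intro m
    have h1 : volume (W m) ≤ ∑' k : ℕ, volume (S (m + k)) := measure_iUnion_le _
    have hhalf : ENNReal.ofReal (1/2 : ℝ) = (2⁻¹ : ℝ≥0∞) := by
      rw [show (1/2 : ℝ) = 2⁻¹ by norm_num, ENNReal.ofReal_inv_of_pos (by norm_num)]
      norm_num
    have h2 : ∀ k : ℕ, volume (S (m + k)) ≤ (2⁻¹ : ℝ≥0∞) ^ (m + k) := by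
      intro k
      refine le_trans (hSv (m + k)).le (le_of_eq ?_)
      rw [ENNReal.ofReal_pow (by norm_num : (0:ℝ) ≤ 1/2), hhalf]
    refine le_trans h1 (le_trans (ENNReal.tsum_le_tsum h2) ?_)
    rw [show (fun k : ℕ => (2⁻¹ : ℝ≥0∞) ^ (m + k)) = fun k : ℕ => (2⁻¹ : ℝ≥0∞) ^ m * 2⁻¹ ^ k by
      funext k; rw [pow_add]]
    rw [ENNReal.tsum_mul_left, ENNReal.tsum_geometric, ENNReal.one_sub_inv_two, inv_inv]
  set T : Set ℝ := ⋂ m, W m with hT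
  have hTm : MeasurableSet T := MeasurableSet.iInter fun m => hWm m
  have hvolT : volume T = 0 := by
    have hle : ∀ m, volume T ≤ (2⁻¹ : ℝ≥0∞) ^ m * 2 :=
      fun m => le_trans (measure_mono (iInter_subset _ m)) (hvolW m)
    have htend : Tendsto (fun m : ℕ => (2⁻¹ : ℝ≥0∞) ^ m * 2) atTop (𝓝 0) := by
      have h1 : Tendsto (fun m : ℕ => (2⁻¹ : ℝ≥0∞) ^ m) atTop (𝓝 0) :=
        ENNReal.tendsto_pow_atTop_nhds_zero_of_lt_one (by norm_num)
      simpa using ENNReal.Tendsto.mul_const h1 (Or.inr (by norm_num))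
    have := le_of_tendsto_of_tendsto' tendsto_const_nhds htend hle
    simpa using this
  -- sphere side
  set F : Sph n → ℝ := fun ω => ⟪e₀, (ω : Eu n)⟫ with hF
  have hFm : Measurable F := (Continuous.inner continuous_const continuous_subtype_val).measurable
  have hmono : ∀ m, σ Set.univ / 2 ≤ σ (F ⁻¹' W m) := by
    intro m
    refine le_trans (hSge m) (measure_mono ?_)
    intro ω hω
    exact mem_iUnion.2 ⟨0, by simpa using hω⟩
  have htendσ : Tendsto (fun m => σ (F ⁻¹' W m)) atTop (𝓝 (σ (⋂ m, F ⁻¹' W m))) := by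
    refine tendsto_measure_iInter_atTop (fun m => (hFm (hWm m)).nullMeasurableSet)
      (fun a b hab => preimage_mono (hWanti hab)) ⟨0, measure_ne_top _ _⟩
  have hiInter : (⋂ m, F ⁻¹' W m) = F ⁻¹' T := by
    rw [hT, preimage_iInter]
  have hge := ge_of_tendsto' htendσ hmono
  rw [hiInter] at hge
  have hzero : σ (F ⁻¹' T) = 0 := sph_null hn e₀ hne₀ hTm hvolT
  rw [hzero] at hge
  exact absurd hge (by simpa using hhalfpos)

/-- The set of latitudes hitting close to integer multiples. -/
def band (r η : ℝ) : Set ℝ := {s : ℝ | |s| ≤ 1 ∧ ∃ k : ℤ, |r * s - k| ≤ η}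

lemma band_eq {r η : ℝ} (hr : 0 < r) :
    band r η = ⋃ k : ℤ, (Set.Icc (-1 : ℝ) 1 ∩ Set.Icc (((k : ℝ) - η)/r) (((k : ℝ) + η)/r)) := by
  ext s
  simp only [band, mem_setOf_eq, mem_iUnion, mem_inter_iff, mem_Icc, abs_le]
  constructor
  · rintro ⟨h1, k, hk⟩
    refine ⟨k, h1, ?_, ?_⟩
    · rw [div_le_iff₀ hr]
      linarith [hk.1]
    · rw [le_div_iff₀ hr]
      linarith [hk.2]
  · rintro ⟨k, h1, h2, h3⟩
    rw [div_le_iff₀ hr] at h2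
    rw [le_div_iff₀ hr] at h3
    exact ⟨h1, k, by constructor <;> linarith⟩

lemma band_measurable {r η : ℝ} (hr : 0 < r) : MeasurableSet (band r η) := by
  rw [band_eq hr]
  exact MeasurableSet.iUnion fun k => measurableSet_Icc.inter measurableSet_Icc

lemma band_vol {r η : ℝ} (hr : 1 < r) (hη : 0 < η) (hη1 : η ≤ 1) :
    volume (band r η) ≤ ENNReal.ofReal (14 * η) := by
  have hr0 : 0 < r := lt_trans one_pos hr
  set K : ℤ := ⌈r⌉ + 1 with hK
  have hsub : band r η ⊆ ⋃ k ∈ Finset.Icc (-K) K, Set.Icc (((k : ℝ) - η)/r) (((k : ℝ) + η)/r) := by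
    intro s hs
    obtain ⟨h1, k, hk⟩ := hs
    have hk' := abs_le.1 hk
    have habs : |(k : ℝ)| ≤ r + 1 := by
      have : |(k : ℝ)| ≤ |r * s| + η := by
        have := abs_sub_abs_le_abs_sub (k : ℝ) (r * s)
        rw [abs_sub_comm] at this
        linarith
      have h2 : |r * s| ≤ r := by
        rw [abs_mul, abs_of_pos hr0]
        nlinarith [abs_le.1 h1]
      linarith
    have hkK : k ∈ Finset.Icc (-K) K := by
      rw [Finset.mem_Icc]
      have hceil : r + 1 ≤ (K : ℝ) := by
        rw [hK]
        push_cast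
        linarith [Int.le_ceil r]
      have h3 := abs_le.1 habs
      constructor
      · exact_mod_cast by
          have : -(K : ℝ) ≤ (k : ℝ) := by linarith
          exact_mod_cast this
      · exact_mod_cast by
          have : (k : ℝ) ≤ (K : ℝ) := by linarith
          exact_mod_cast this
    refine Set.mem_biUnion hkK ?_
    rw [mem_Icc]
    constructor
    · rw [div_le_iff₀ hr0]; linarith [hk'.1]
    · rw [le_div_iff₀ hr0]; linarith [hk'.2]
  refine le_trans (measure_mono hsub) (le_trans (measure_biUnion_finset_le _ _) ?_)
  have hIcc : ∀ k : ℤ, volume (Set.Icc (((k : ℝ) - η)/r) (((k : ℝ) + η)/r))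
      = ENNReal.ofReal (2 * η / r) := by
    intro k
    rw [Real.volume_Icc]
    congr 1
    field_simp
    ring
  simp only [hIcc, Finset.sum_const, nsmul_eq_mul]
  have hK1 : (0:ℤ) < ⌈r⌉ := Int.ceil_pos.2 hr0
  have hcard : ((Finset.Icc (-K) K).card : ℝ) = 2 * (K : ℝ) + 1 := by
    rw [Int.card_Icc]
    have h1 : K + 1 - (-K) = 2 * K + 1 := by ring
    rw [h1]
    have h0 : (0:ℤ) ≤ 2 * K + 1 := by omega
    have h2 : ((2 * K + 1).toNat : ℤ) = 2 * K + 1 := Int.toNat_of_nonneg h0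
    rw [← Int.cast_natCast (R := ℝ), h2]
    push_cast
    ring
  have hKr : (K : ℝ) ≤ r + 2 := by
    rw [hK]
    push_cast
    linarith [Int.ceil_lt_add_one r]
  calc ((Finset.Icc (-K) K).card : ℝ≥0∞) * ENNReal.ofReal (2 * η / r)
      = ENNReal.ofReal (((Finset.Icc (-K) K).card : ℝ) * (2 * η / r)) := by
        rw [ENNReal.ofReal_mul (by positivity)]
        congr 1
        rw [ENNReal.ofReal_natCast]
    _ ≤ ENNReal.ofReal (14 * η) := by
        refine ENNReal.ofReal_le_ofReal ?_
        rw [hcard]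
        have h2 : 2 * (K : ℝ) + 1 ≤ 7 * r := by nlinarith
        have h3 : 0 < 2 * η / r := by positivity
        calc (2 * (K : ℝ) + 1) * (2 * η / r) ≤ 7 * r * (2 * η / r) := by
              exact mul_le_mul_of_nonneg_right h2 h3.le
          _ = 14 * η := by field_simp; ring
  
lemma cos_le_of_far (θ η : ℝ) (hη0 : 0 < η) (hη : η ≤ 4⁻¹) (h : ∀ k : ℤ, η < |θ - k|) :
    Real.cos (2 * π * θ) ≤ Real.cos (2 * π * η) := by
  set k := round θ with hk
  have hd : |θ - k| ≤ 1 / 2 := abs_sub_round θ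
  have h1 : η < |θ - k| := h k
  have hc1 : Real.cos (2 * π * θ) = Real.cos (2 * π * (θ - k)) := by
    rw [show 2 * π * (θ - k) = 2 * π * θ - k * (2 * π) by ring, Real.cos_sub_int_mul_two_pi]
  have hc2 : Real.cos (2 * π * (θ - k)) = Real.cos (2 * π * |θ - k|) := by
    rw [show 2 * π * |θ - k| = |2 * π * (θ - k)| by
      rw [abs_mul, abs_of_pos (by positivity : (0:ℝ) < 2 * π)]]
    rw [Real.cos_abs]
  rw [hc1, hc2]
  refine Real.cos_le_cos_of_nonneg_of_le_pi (by positivity) ?_ ?_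
  · calc 2 * π * |θ - k| ≤ 2 * π * (1/2) := by
          refine mul_le_mul_of_nonneg_left hd (by positivity)
      _ = π := by ring
  · nlinarith [h1, Real.pi_pos]

lemma integrable_bdd {n : ℕ} {β : Type*} [NormedAddCommGroup β] {g : Sph n → β}
    (hg : Continuous g) (C : ℝ) (hC : ∀ ω, ‖g ω‖ ≤ C) :
    Integrable g ((volume : Measure (Eu n)).toSphere) :=
  (integrable_const C).mono' hg.aestronglyMeasurable (Filter.Eventually.of_forall hC)

/-- The Fourier transform of the spherical mean minus the function. -/
lemma key_fourier {n : ℕ} (f : Eu n → ℂ) (hf : Integrable f volume) (t : ℝ) (ξ : Eu n) :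
    Integrable (fun x => sphericalMean n f t x - f x) volume ∧
    𝓕 (fun x => sphericalMean n f t x - f x) ξ =
      (((((volume : Measure (Eu n)).toSphere Set.univ).toReal⁻¹ : ℝ) : ℂ) *
        (∫ ω : Sph n, ((𝐞 (⟪(ω : Eu n), t • ξ⟫) : Circle) : ℂ)
          ∂(volume : Measure (Eu n)).toSphere) - 1) * 𝓕 f ξ := by
  set σ : Measure (Sph n) := (volume : Measure (Eu n)).toSphere with hσ
  set c : ℝ := (σ Set.univ).toReal with hc
  have hΦc : Continuous (fun p : Sph n × Eu n => p.2 + t • (p.1 : Eu n)) :=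
    continuous_snd.add ((continuous_subtype_val.comp continuous_fst).const_smul t)
  have hΦm : Measurable (fun p : Sph n × Eu n => p.2 + t • (p.1 : Eu n)) := hΦc.measurable
  have hmap : (σ.prod volume).map (fun p : Sph n × Eu n => p.2 + t • (p.1 : Eu n)) ≪ volume := by
    refine Measure.AbsolutelyContinuous.mk fun B hB h0 => ?_
    rw [Measure.map_apply hΦm hB, Measure.prod_apply (hΦm hB)]
    have hsec : ∀ ω : Sph n, volume (Prod.mk ω ⁻¹'
        ((fun p : Sph n × Eu n => p.2 + t • (p.1 : Eu n)) ⁻¹' B)) = 0 := by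
      intro ω
      have heq : (Prod.mk ω ⁻¹' ((fun p : Sph n × Eu n => p.2 + t • (p.1 : Eu n)) ⁻¹' B))
          = (fun x => x + t • (ω : Eu n)) ⁻¹' B := rfl
      rw [heq, measure_preimage_add_right volume _ B, h0]
    simp only [hsec]
    simp
  have hG : AEStronglyMeasurable (fun p : Sph n × Eu n => f (p.2 + t • (p.1 : Eu n)))
      (σ.prod volume) :=
    (hf.aestronglyMeasurable.mono_ac hmap).comp_measurable hΦm
  have hGint : Integrable (fun p : Sph n × Eu n => f (p.2 + t • (p.1 : Eu n))) (σ.prod volume) := by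
    refine (integrable_prod_iff hG).2 ⟨?_, ?_⟩
    · exact Filter.Eventually.of_forall fun ω =>
        (hf.comp_add_right (t • (ω : Eu n)) : Integrable (fun y => f (y + t • (ω : Eu n))) volume)
    · have heq : (fun ω : Sph n => ∫ x, ‖f (x + t • (ω : Eu n))‖) = fun _ => ∫ x, ‖f x‖ := by
        funext ω
        exact integral_add_right_eq_self (fun x => ‖f x‖) _
      show Integrable (fun ω : Sph n => ∫ x, ‖f (x + t • (ω : Eu n))‖) σ
      rw [heq]
      exact integrable_const _
  have hMint0 : Integrable (fun x : Eu n => ∫ ω, f (x + t • (ω : Eu n)) ∂σ) volume :=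
    hGint.integral_prod_right
  have hMeq : sphericalMean n f t = fun x => c⁻¹ • ∫ ω, f (x + t • (ω : Eu n)) ∂σ := rfl
  have hM : Integrable (sphericalMean n f t) volume := by
    rw [hMeq]
    exact hMint0.smul c⁻¹
  -- Fourier transform of the spherical mean
  have hFM : 𝓕 (sphericalMean n f t) ξ =
      (((c⁻¹ : ℝ) : ℂ) * ∫ ω : Sph n, ((𝐞 (⟪(ω : Eu n), t • ξ⟫) : Circle) : ℂ) ∂σ) * 𝓕 f ξ := by
    have e1 : 𝓕 (sphericalMean n f t) ξ
        = ∫ x, ((𝐞 (-⟪x, ξ⟫) : Circle) : ℂ) * sphericalMean n f t x := by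
      rw [Real.fourier_eq]
      simp_rw [Circle.smul_def, smul_eq_mul]
    have e2 : ∫ x, ((𝐞 (-⟪x, ξ⟫) : Circle) : ℂ) * sphericalMean n f t x
        = ((c⁻¹ : ℝ) : ℂ) * ∫ x, ((𝐞 (-⟪x, ξ⟫) : Circle) : ℂ)
            * ∫ ω, f (x + t • (ω : Eu n)) ∂σ := by
      rw [← integral_const_mul]
      congr 1
      funext x
      rw [hMeq]
      show ((𝐞 (-⟪x, ξ⟫) : Circle) : ℂ) * (c⁻¹ • ∫ ω, f (x + t • (ω : Eu n)) ∂σ)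
        = ((c⁻¹ : ℝ) : ℂ) * (((𝐞 (-⟪x, ξ⟫) : Circle) : ℂ) * ∫ ω, f (x + t • (ω : Eu n)) ∂σ)
      rw [Complex.real_smul]
      ring
    have e3 : ∀ x : Eu n, ((𝐞 (-⟪x, ξ⟫) : Circle) : ℂ) * ∫ ω, f (x + t • (ω : Eu n)) ∂σ
        = ∫ ω, ((𝐞 (-⟪x, ξ⟫) : Circle) : ℂ) * f (x + t • (ω : Eu n)) ∂σ :=
      fun x => (integral_const_mul _ _).symm
    have hswapint : Integrable (Function.uncurry fun (x : Eu n) (ω : Sph n) =>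
        ((𝐞 (-⟪x, ξ⟫) : Circle) : ℂ) * f (x + t • (ω : Eu n))) (volume.prod σ) := by
      have h1 : Integrable (fun p : Eu n × Sph n => f (p.1 + t • ((p.2 : Eu n)))) (volume.prod σ) :=
        hGint.swap
      refine h1.bdd_mul (c := 1) ?_ (Filter.Eventually.of_forall fun p => (Circle.norm_coe _).le)
      refine Continuous.aestronglyMeasurable ?_
      exact continuous_subtype_val.comp (Real.continuous_fourierChar.comp
        ((continuous_fst.inner continuous_const).neg))
    have e4 : ∫ x, ∫ ω, ((𝐞 (-⟪x, ξ⟫) : Circle) : ℂ) * f (x + t • (ω : Eu n)) ∂σ ∂volume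
        = ∫ ω, ∫ x, ((𝐞 (-⟪x, ξ⟫) : Circle) : ℂ) * f (x + t • (ω : Eu n)) ∂volume ∂σ :=
      integral_integral_swap hswapint
    have e5 : ∀ ω : Sph n, ∫ x, ((𝐞 (-⟪x, ξ⟫) : Circle) : ℂ) * f (x + t • (ω : Eu n)) ∂volume
        = ((𝐞 (⟪(ω : Eu n), t • ξ⟫) : Circle) : ℂ) * 𝓕 f ξ := by
      intro ω
      have h := congrFun (VectorFourier.fourierIntegral_comp_add_right 𝐞
        (volume : Measure (Eu n)) (innerₗ (Eu n)) f (t • (ω : Eu n))) ξ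
      simp only [VectorFourier.fourierIntegral, innerₗ_apply_apply, Function.comp_apply,
        Circle.smul_def, smul_eq_mul] at h
      rw [h]
      have hFI : 𝓕 f ξ = ∫ v, ((𝐞 (-⟪v, ξ⟫) : Circle) : ℂ) * f v := by
        rw [Real.fourier_eq]
        simp_rw [Circle.smul_def, smul_eq_mul]
      rw [hFI]
      congr 2
      rw [real_inner_smul_left, real_inner_smul_right]
    rw [e1, e2]
    simp_rw [e3]
    rw [e4]
    simp_rw [e5]
    rw [integral_mul_const]
    ring
  -- difference
  have hdiff : Integrable (fun x => sphericalMean n f t x - f x) volume := hM.sub hf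
  refine ⟨hdiff, ?_⟩
  have hsub : 𝓕 (fun x => sphericalMean n f t x - f x) ξ
      = 𝓕 (sphericalMean n f t) ξ - 𝓕 f ξ := by
    rw [Real.fourier_eq, Real.fourier_eq, Real.fourier_eq]
    simp_rw [smul_sub]
    exact integral_sub ((Real.fourierIntegral_convergent_iff ξ).2 hM)
      ((Real.fourierIntegral_convergent_iff ξ).2 hf)
  rw [hsub, hFM]
  ring

end QRLaux

end

open QRLaux Metric Set Filter Real
open scoped ENNReal RealInnerProductSpace Topology

theorem quantified_riemann_lebesgue_L1 (n : ℕ) (hn : 2 ≤ n) :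
    ∃ C : ℝ, 0 < C ∧
      ∀ (f : EuclideanSpace ℝ (Fin n) → ℂ), Integrable f → ∀ t : ℝ, 0 < t →
        ∀ ξ : EuclideanSpace ℝ (Fin n), 1 / t < ‖ξ‖ →
          ‖𝓕 f ξ‖ ≤ C * ∫ x, ‖sphericalMean n f t x - f x‖ := by
  obtain ⟨δ, hδ, hsmall⟩ := QRLaux.small_slab n hn
  set η := min (δ / 15) (4⁻¹ : ℝ) with hη
  have hη0 : 0 < η := lt_min (by positivity) (by norm_num)
  have hη4 : η ≤ 4⁻¹ := min_le_right _ _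
  have hη1 : η ≤ 1 := le_trans hη4 (by norm_num)
  have hηδ : 14 * η < δ := by
    have h1 : η ≤ δ / 15 := min_le_left _ _
    nlinarith
  have hcos : Real.cos (2 * π * η) < 1 := by
    have h2π : 2 * π * η ≤ π := by
      have hπ := Real.pi_pos
      calc 2 * π * η ≤ 2 * π * 4⁻¹ := mul_le_mul_of_nonneg_left hη4 (by positivity)
        _ ≤ π := by linarith
    have h := Real.cos_lt_cos_of_nonneg_of_le_pi (le_refl (0:ℝ)) h2π (by positivity)
    simpa using h
  set C := 2 / (1 - Real.cos (2 * π * η)) with hC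
  have hCpos : 0 < C := by
    apply div_pos (by norm_num)
    linarith
  refine ⟨C, hCpos, ?_⟩
  intro f hf t ht ξ hξ
  set σ : Measure (Sph n) := (volume : Measure (Eu n)).toSphere with hσ
  obtain ⟨hσ0, hσt⟩ := QRLaux.sigma_univ_pos (n := n) hn
  set c : ℝ := (σ Set.univ).toReal with hc
  have hc0 : 0 < c := ENNReal.toReal_pos hσ0.ne' hσt
  set ζ : Eu n := t • ξ with hζdef
  have hζ : 1 < ‖ζ‖ := by
    rw [hζdef, norm_smul, Real.norm_eq_abs, abs_of_pos ht]
    rw [div_lt_iff₀ ht] at hξ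
    linarith [mul_comm t ‖ξ‖, hξ]
  set r : ℝ := ‖ζ‖ with hr
  have hr0 : 0 < r := lt_trans one_pos hζ
  set e : Eu n := r⁻¹ • ζ with he
  have hre : ‖e‖ = 1 := by
    rw [he, norm_smul, Real.norm_eq_abs, abs_of_pos (by positivity)]
    field_simp
    exact hr.symm
  -- the bad latitude set
  set S := QRLaux.band r η with hS
  have hSm : MeasurableSet S := QRLaux.band_measurable hr0
  have hSv : volume S < ENNReal.ofReal δ :=
    lt_of_le_of_lt (QRLaux.band_vol hζ hη0 hη1) ((ENNReal.ofReal_lt_ofReal_iff hδ).2 hηδ)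
  have hA := hsmall S hSm hSv e hre
  set A : Set (Sph n) := {ω : Sph n | ⟪e, (ω : Eu n)⟫ ∈ S} with hAdef
  have hAm : MeasurableSet A :=
    (Continuous.inner continuous_const continuous_subtype_val).measurable hSm
  -- measure of the complement
  have hcompl : c / 2 ≤ (σ Aᶜ).toReal := by
    have h1 : σ Aᶜ = σ Set.univ - σ A := measure_compl hAm (measure_ne_top _ _)
    have h2 : (σ A).toReal < c / 2 := by
      have := ENNReal.toReal_lt_toReal (measure_ne_top σ A)
        ((ENNReal.div_lt_top hσt (by norm_num)).ne : σ Set.univ / 2 ≠ ∞) |>.2 hA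
      rw [ENNReal.toReal_div] at this
      simp only [ENNReal.toReal_ofNat] at this
      exact this
    have h3 : (σ Aᶜ).toReal = c - (σ A).toReal := by
      rw [h1, ENNReal.toReal_sub_of_le (measure_mono (subset_univ _)) hσt]
    rw [h3]
    linarith
  -- pointwise lower bound on the complement
  have hpt : ∀ ω : Sph n, ω ∈ Aᶜ →
      1 - Real.cos (2 * π * η) ≤ 1 - Real.cos (2 * π * ⟪(ω : Eu n), ζ⟫) := by
    intro ω hω
    have hωn : ‖(ω : Eu n)‖ = 1 := mem_sphere_zero_iff_norm.1 ω.2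
    have hip : |⟪e, (ω : Eu n)⟫| ≤ 1 := by
      calc |⟪e, (ω : Eu n)⟫| ≤ ‖e‖ * ‖(ω : Eu n)‖ := abs_real_inner_le_norm _ _
        _ = 1 := by rw [hre, hωn, mul_one]
    have hnot : ¬ (⟪e, (ω : Eu n)⟫ ∈ S) := hω
    rw [hS] at hnot
    simp only [QRLaux.band, mem_setOf_eq, not_and, not_exists, not_le] at hnot
    have hfar : ∀ k : ℤ, η < |r * ⟪e, (ω : Eu n)⟫ - k| := hnot hip
    have hinner : r * ⟪e, (ω : Eu n)⟫ = ⟪(ω : Eu n), ζ⟫ := by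
      rw [he, real_inner_smul_left, real_inner_comm]
      field_simp
    rw [hinner] at hfar
    have := QRLaux.cos_le_of_far _ _ hη0 hη4 hfar
    linarith
  -- integral lower bound
  set g : Sph n → ℝ := fun ω => 1 - Real.cos (2 * π * ⟪(ω : Eu n), ζ⟫) with hg
  have hgc : Continuous g := by
    refine continuous_const.sub (Real.continuous_cos.comp ?_)
    exact continuous_const.mul (Continuous.inner continuous_subtype_val continuous_const)
  have hgint : Integrable g σ := by
    refine QRLaux.integrable_bdd hgc 2 fun ω => ?_
    rw [Real.norm_eq_abs, abs_le]
    constructor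
    · have := Real.cos_le_one (2 * π * ⟪(ω : Eu n), ζ⟫)
      simp only [hg]
      linarith
    · have := Real.neg_one_le_cos (2 * π * ⟪(ω : Eu n), ζ⟫)
      simp only [hg]
      linarith
  have hg0 : ∀ ω, 0 ≤ g ω := by
    intro ω
    have := Real.cos_le_one (2 * π * ⟪(ω : Eu n), ζ⟫)
    simp only [hg]
    linarith
  have hint1 : (1 - Real.cos (2 * π * η)) * (c / 2) ≤ ∫ ω, g ω ∂σ := by
    have h1 : ∫ ω in Aᶜ, g ω ∂σ ≤ ∫ ω, g ω ∂σ :=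
      setIntegral_le_integral hgint (Filter.Eventually.of_forall hg0)
    have h2 : (1 - Real.cos (2 * π * η)) * (σ Aᶜ).toReal ≤ ∫ ω in Aᶜ, g ω ∂σ :=
      by simpa [Measure.real, smul_eq_mul, mul_comm, hg] using
        setIntegral_ge_of_const_le hAm.compl (measure_ne_top _ _) hpt hgint.integrableOn
    have h3 : (1 - Real.cos (2 * π * η)) * (c / 2)
        ≤ (1 - Real.cos (2 * π * η)) * (σ Aᶜ).toReal :=
      mul_le_mul_of_nonneg_left hcompl (by linarith)
    linarith
  -- the character integral
  set W : ℂ := ∫ ω : Sph n, ((𝐞 (⟪(ω : Eu n), ζ⟫) : Circle) : ℂ) ∂σ with hW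
  have hWintg : Integrable (fun ω : Sph n => ((𝐞 (⟪(ω : Eu n), ζ⟫) : Circle) : ℂ)) σ := by
    refine QRLaux.integrable_bdd ?_ 1 fun ω => (Circle.norm_coe _).le
    exact continuous_subtype_val.comp (Real.continuous_fourierChar.comp
      (Continuous.inner continuous_subtype_val continuous_const))
  have hWre : W.re = ∫ ω, Real.cos (2 * π * ⟪(ω : Eu n), ζ⟫) ∂σ := by
    rw [hW, ← RCLike.re_to_complex, ← integral_re hWintg]
    congr 1
    funext ω
    rw [RCLike.re_to_complex, Real.fourierChar_apply, Complex.exp_ofReal_mul_I_re]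
  have hcW : c - W.re = ∫ ω, g ω ∂σ := by
    have h1 : ∫ ω, g ω ∂σ = (∫ (_ : Sph n), (1:ℝ) ∂σ) - ∫ ω, Real.cos (2 * π * ⟪(ω : Eu n), ζ⟫) ∂σ := by
      rw [← integral_sub (integrable_const 1) (by
        refine QRLaux.integrable_bdd ?_ 1 fun ω => by
          rw [Real.norm_eq_abs]; exact Real.abs_cos_le_one _
        exact Real.continuous_cos.comp (continuous_const.mul
          (Continuous.inner continuous_subtype_val continuous_const)))]
      try rfl
    rw [h1, hWre, integral_const, smul_eq_mul, mul_one, hc]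
    rfl
  -- lower bound for the multiplier
  set z : ℂ := ((c⁻¹ : ℝ) : ℂ) * W - 1 with hz
  have hzre : z.re = c⁻¹ * W.re - 1 := by
    simp [hz, Complex.sub_re, Complex.mul_re]
  have hzbound : (1 - Real.cos (2 * π * η)) / 2 ≤ ‖z‖ := by
    have h1 : (1 - Real.cos (2 * π * η)) * (c / 2) ≤ c - W.re := by rw [hcW]; exact hint1
    have h2 : -z.re = 1 - c⁻¹ * W.re := by rw [hzre]; ring
    have h3 : 1 - c⁻¹ * W.re = c⁻¹ * (c - W.re) := by field_simp
    have h4 : c⁻¹ * ((1 - Real.cos (2 * π * η)) * (c / 2)) ≤ c⁻¹ * (c - W.re) :=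
      mul_le_mul_of_nonneg_left h1 (by positivity)
    have h5 : c⁻¹ * ((1 - Real.cos (2 * π * η)) * (c / 2)) = (1 - Real.cos (2 * π * η)) / 2 := by
      field_simp
      try ring
    have h6 : (1 - Real.cos (2 * π * η)) / 2 ≤ -z.re := by
      rw [h2, h3]
      rw [h5] at h4
      exact h4
    calc (1 - Real.cos (2 * π * η)) / 2 ≤ -z.re := h6
      _ ≤ |z.re| := neg_le_abs _
      _ ≤ ‖z‖ := Complex.abs_re_le_norm z
  -- assemble
  obtain ⟨hdiffint, hdiffF⟩ := QRLaux.key_fourier f hf t ξ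
  have hb : ‖𝓕 (fun x => sphericalMean n f t x - f x) ξ‖
      ≤ ∫ x, ‖sphericalMean n f t x - f x‖ :=
    VectorFourier.norm_fourierIntegral_le_integral_norm 𝐞 volume (innerₗ (Eu n)) _ ξ
  have hFz : 𝓕 (fun x => sphericalMean n f t x - f x) ξ = z * 𝓕 f ξ := by
    rw [hdiffF]
    try rfl
  rw [hFz, norm_mul] at hb
  have hzF : (1 - Real.cos (2 * π * η)) / 2 * ‖𝓕 f ξ‖ ≤ ‖z‖ * ‖𝓕 f ξ‖ :=
    mul_le_mul_of_nonneg_right hzbound (norm_nonneg _)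
  have hfin : (1 - Real.cos (2 * π * η)) / 2 * ‖𝓕 f ξ‖
      ≤ ∫ x, ‖sphericalMean n f t x - f x‖ := le_trans hzF hb
  have hCinv : C⁻¹ = (1 - Real.cos (2 * π * η)) / 2 := by
    rw [hC, inv_div]
  rw [← hCinv] at hfin
  calc ‖𝓕 f ξ‖ = C * (C⁻¹ * ‖𝓕 f ξ‖) := by
        field_simp
    _ ≤ C * ∫ x, ‖sphericalMean n f t x - f x‖ :=
        mul_le_mul_of_nonneg_left hfin hCpos.le
end

section
/- For λ, t, r > 0 the function I(λ/r, z) = 1 - j_α(λz/r) with α > -1/2 satisfies: ∫₀¹ (1 - j_α(λz/r)) dz ≥ C₁·min{1, (λ/r)²} for a positive constant C₁ depending only on α. -/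
open Real MeasureTheory Set intervalIntegral


lemma aux_cos (u : ℝ) (h0 : 0 ≤ u) (hπ : u ≤ π) : 2/π^2 * u^2 ≤ 1 - Real.cos u := by
  have hπ0 := Real.pi_pos
  have h1 : u / π ≤ Real.sin (u/2) := by
    have := Real.mul_le_sin (x := u/2) (by linarith) (by linarith)
    calc u / π = 2/π * (u/2) := by ring
    _ ≤ _ := this
  have h2 : Real.cos u = 1 - 2 * Real.sin (u/2)^2 := by
    have ha := Real.cos_two_mul (u/2)
    have hb := Real.sin_sq (u/2)
    rw [show (2:ℝ)*(u/2) = u by ring] at ha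
    linarith
  have h3 : (u/π)^2 ≤ Real.sin (u/2)^2 := by
    have h4 : 0 ≤ u / π := by positivity
    nlinarith
  have h5 : (u/π)^2 = u^2/π^2 := by ring
  have h6 : 2/π^2 * u^2 = 2 * (u^2/π^2) := by ring
  rw [h2]; rw [h5] at h3; linarith

lemma aux_meas (p : ℝ) : Measurable (fun y : ℝ => (1 - y^2)^p) := by fun_prop

lemma aux_int1 {p : ℝ} (hp : -1 < p) :
    IntervalIntegrable (fun y : ℝ => (1 - y^2)^p) volume 0 1 := by
  have hb : IntervalIntegrable (fun y : ℝ => (1 - y)^p) volume 0 1 := by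
    have := ((intervalIntegral.intervalIntegrable_rpow' (a := 0) (b := 1) hp).comp_sub_left 1).symm
    simpa using this
  have hbM : IntervalIntegrable (fun y : ℝ => max 1 (2^p) * (1 - y)^p) volume 0 1 :=
    hb.const_mul _
  refine hbM.mono_fun (aux_meas p).aestronglyMeasurable ?_
  filter_upwards [ae_restrict_mem measurableSet_uIoc] with y hy
  rw [uIoc_of_le (by norm_num : (0:ℝ) ≤ 1)] at hy
  have hy0 : 0 < y := hy.1
  have hy1 : y ≤ 1 := hy.2
  have h1y : 0 ≤ 1 - y := by linarith
  have h1y2 : (0:ℝ) ≤ 1 - y^2 := by nlinarith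
  have heq : (1 - y^2 : ℝ) = (1-y) * (1+y) := by ring
  rw [Real.norm_eq_abs, Real.norm_eq_abs, abs_of_nonneg (Real.rpow_nonneg h1y2 p)]
  rw [heq, Real.mul_rpow h1y (by linarith)]
  have h2 : (1+y)^p ≤ max 1 (2^p) := by
    rcases le_or_gt 0 p with h | h
    · exact le_max_of_le_right (Real.rpow_le_rpow (by linarith) (by linarith) h)
    · exact le_max_of_le_left (Real.rpow_le_one_of_one_le_of_nonpos (by linarith) h.le)
  calc (1-y)^p * (1+y)^p ≤ (1-y)^p * max 1 (2^p) :=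
        mul_le_mul_of_nonneg_left h2 (Real.rpow_nonneg h1y p)
  _ = max 1 (2^p) * (1-y)^p := by ring
  _ ≤ |max 1 (2^p) * (1-y)^p| := le_abs_self _

lemma aux_int2 {p : ℝ} (hp : -1 < p) :
    IntervalIntegrable (fun u : ℝ => u^(-(1/2):ℝ) * (1-u)^p) volume 0 1 := by
  have m : Measurable (fun u : ℝ => u^(-(1/2):ℝ) * (1-u)^p) := by fun_prop
  have h1 : IntervalIntegrable (fun u : ℝ => u^(-(1/2):ℝ) * (1-u)^p) volume 0 (1/2) := by
    have hb : IntervalIntegrable (fun u : ℝ => max 1 ((1/2:ℝ)^p) * u^(-(1/2):ℝ)) volume 0 (1/2) :=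
      (intervalIntegral.intervalIntegrable_rpow' (by norm_num)).const_mul _
    refine hb.mono_fun m.aestronglyMeasurable ?_
    filter_upwards [ae_restrict_mem measurableSet_uIoc] with u hu
    rw [uIoc_of_le (by norm_num : (0:ℝ) ≤ 1/2)] at hu
    have hu0 : 0 < u := hu.1
    have hu1 : u ≤ 1/2 := hu.2
    have h2 : (1-u)^p ≤ max 1 ((1/2:ℝ)^p) := by
      rcases le_or_gt 0 p with h | h
      · exact le_max_of_le_left (Real.rpow_le_one (by linarith) (by linarith) h)
      · exact le_max_of_le_right
          (Real.rpow_le_rpow_of_nonpos (by norm_num) (by linarith) h.le)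
    rw [Real.norm_eq_abs, Real.norm_eq_abs, abs_mul,
      abs_of_nonneg (Real.rpow_nonneg hu0.le _), abs_of_nonneg (Real.rpow_nonneg (by linarith) _)]
    calc u^(-(1/2):ℝ) * (1-u)^p ≤ u^(-(1/2):ℝ) * max 1 ((1/2:ℝ)^p) :=
          mul_le_mul_of_nonneg_left h2 (Real.rpow_nonneg hu0.le _)
    _ = max 1 ((1/2:ℝ)^p) * u^(-(1/2):ℝ) := by ring
    _ ≤ |max 1 ((1/2:ℝ)^p) * u^(-(1/2):ℝ)| := le_abs_self _
  have h2 : IntervalIntegrable (fun u : ℝ => u^(-(1/2):ℝ) * (1-u)^p) volume (1/2) 1 := by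
    have hb0 : IntervalIntegrable (fun u : ℝ => (1-u)^p) volume (1/2) 1 := by
      have := ((intervalIntegral.intervalIntegrable_rpow' (a := 0) (b := 1/2) hp).comp_sub_left 1).symm
      norm_num at this
      convert this using 2 <;> norm_num
    have hb : IntervalIntegrable (fun u : ℝ => 2 * (1-u)^p) volume (1/2) 1 := hb0.const_mul _
    refine hb.mono_fun m.aestronglyMeasurable ?_
    filter_upwards [ae_restrict_mem measurableSet_uIoc] with u hu
    rw [uIoc_of_le (by norm_num : (1/2:ℝ) ≤ 1)] at hu
    have hu0 : (1/2:ℝ) < u := hu.1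
    have hu1 : u ≤ 1 := hu.2
    have h2 : u^(-(1/2):ℝ) ≤ 2 := by
      have : u^(-(1/2):ℝ) ≤ (1/2:ℝ)^(-(1/2):ℝ) :=
        Real.rpow_le_rpow_of_nonpos (by norm_num) (by linarith) (by norm_num)
      refine this.trans ?_
      have e1 : ((1/2:ℝ))^(-(1/2):ℝ) = (2:ℝ)^((1/2):ℝ) := by
        rw [show (1/2:ℝ) = 2⁻¹ by norm_num, Real.inv_rpow (by norm_num),
          ← Real.rpow_neg (by norm_num), neg_neg]
      rw [e1]
      calc (2:ℝ) ^ ((1/2 : ℝ)) ≤ 2 ^ ((1:ℝ)) :=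
            Real.rpow_le_rpow_of_exponent_le (by norm_num) (by norm_num)
      _ = 2 := Real.rpow_one 2
    rw [Real.norm_eq_abs, Real.norm_eq_abs, abs_mul,
      abs_of_nonneg (Real.rpow_nonneg (by linarith : (0:ℝ) ≤ u) _),
      abs_of_nonneg (Real.rpow_nonneg (by linarith : (0:ℝ) ≤ 1-u) _)]
    calc u^(-(1/2):ℝ) * (1-u)^p ≤ 2 * (1-u)^p :=
          mul_le_mul_of_nonneg_right h2 (Real.rpow_nonneg (by linarith) _)
    _ ≤ |2 * (1-u)^p| := le_abs_self _
  exact h1.trans h2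


lemma aux_beta {p : ℝ} (hp : -1 < p) :
    ∫ u in (0:ℝ)..1, u^(-(1/2):ℝ) * (1-u)^p
      = Real.Gamma (1/2) * Real.Gamma (p+1) / Real.Gamma (p+3/2) := by
  have h32 : 0 < Real.Gamma (p+3/2) := Real.Gamma_pos_of_pos (by linarith)
  have key := Complex.Gamma_mul_Gamma_eq_betaIntegral
    (s := ((1/2:ℝ):ℂ)) (t := ((p+1:ℝ):ℂ)) (by norm_num) (by simp; linarith)
  have hbeta : Complex.betaIntegral ((1/2:ℝ):ℂ) ((p+1:ℝ):ℂ)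
      = ((∫ u in (0:ℝ)..1, u^(-(1/2):ℝ) * (1-u)^p : ℝ) : ℂ) := by
    rw [Complex.betaIntegral, ← intervalIntegral.integral_ofReal]
    refine intervalIntegral.integral_congr_ae ?_
    refine Filter.Eventually.of_forall fun x hx => ?_
    rw [uIoc_of_le (by norm_num : (0:ℝ) ≤ 1)] at hx
    have hx0 : (0:ℝ) ≤ x := hx.1.le
    have hx1 : (0:ℝ) ≤ 1 - x := by linarith [hx.2]
    have e1 : ((1/2:ℝ):ℂ) - 1 = ((-(1/2):ℝ):ℂ) := by push_cast; ring
    have e2 : ((p+1:ℝ):ℂ) - 1 = ((p:ℝ):ℂ) := by push_cast; ring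
    have e3 : (1:ℂ) - (x:ℂ) = ((1-x:ℝ):ℂ) := by push_cast; ring
    rw [e1, e2, e3, ← Complex.ofReal_cpow hx0, ← Complex.ofReal_cpow hx1,
      ← Complex.ofReal_mul]
  rw [hbeta] at key
  have hg1 : Complex.Gamma ((1/2:ℝ):ℂ) = (Real.Gamma (1/2) : ℂ) := Complex.Gamma_ofReal _
  have hg2 : Complex.Gamma ((p+1:ℝ):ℂ) = (Real.Gamma (p+1) : ℂ) := Complex.Gamma_ofReal _
  have hsum : ((1/2:ℝ):ℂ) + ((p+1:ℝ):ℂ) = ((p+3/2:ℝ):ℂ) := by push_cast; ring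
  rw [hg1, hg2, hsum, Complex.Gamma_ofReal] at key
  have : (Real.Gamma (1/2) * Real.Gamma (p+1) : ℝ)
      = (Real.Gamma (p+3/2) * ∫ u in (0:ℝ)..1, u^(-(1/2):ℝ) * (1-u)^p : ℝ) := by
    exact_mod_cast key
  rw [eq_div_iff h32.ne']
  linear_combination -this

lemma aux_K {p : ℝ} (hp : -1 < p) :
    ∫ y in (0:ℝ)..1, (1-y^2)^p
      = Real.Gamma (1/2) * Real.Gamma (p+1) / (2 * Real.Gamma (p+3/2)) := by
  set g : ℝ → ℝ := fun u => u^(-(1/2):ℝ) * (1-u)^p with hg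
  have himg1 : (fun y : ℝ => y^2) '' Ioo (min (0:ℝ) 1) (max 0 1) ⊆ Ioo 0 1 := by
    rintro _ ⟨y, hy, rfl⟩
    norm_num at hy
    show y^2 ∈ Ioo (0:ℝ) 1
    rw [mem_Ioo]
    exact ⟨pow_pos hy.1 2, by nlinarith [hy.1, hy.2]⟩
  have himg2 : (fun y : ℝ => y^2) '' (Set.uIcc (0:ℝ) 1) ⊆ Icc 0 1 := by
    rintro _ ⟨y, hy, rfl⟩
    rw [Set.uIcc_of_le (by norm_num : (0:ℝ) ≤ 1)] at hy
    show y^2 ∈ Icc (0:ℝ) 1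
    rw [mem_Icc]
    exact ⟨by positivity, by nlinarith [hy.1, hy.2]⟩
  have hgIoc : IntegrableOn g (Ioc 0 1) volume := (aux_int2 hp).1
  have key := intervalIntegral.integral_comp_mul_deriv''' (a := 0) (b := 1)
    (f := fun y : ℝ => y^2) (f' := fun y : ℝ => 2*y) (g := g)
    ((continuous_pow 2).continuousOn)
    (fun x _ => by
      simpa using ((hasDerivAt_pow 2 x).hasDerivWithinAt (s := Ioi x)))
    (by
      refine ContinuousOn.mono ?_ himg1
      refine ContinuousOn.mul ?_ ?_
      · exact continuousOn_id.rpow_const fun x hx => Or.inl (ne_of_gt hx.1)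
      · exact (continuousOn_const.sub continuousOn_id).rpow_const
          fun x hx => Or.inl (by intro h; simp only [Pi.sub_apply, id] at h; nlinarith [hx.2]))
    (by
      refine IntegrableOn.mono_set ?_ himg2
      exact (integrableOn_Icc_iff_integrableOn_Ioc).2 hgIoc)
    (by
      rw [Set.uIcc_of_le (by norm_num : (0:ℝ) ≤ 1)]
      rw [integrableOn_Icc_iff_integrableOn_Ioc]
      have base : IntegrableOn (fun y : ℝ => 2 * (1-y^2)^p) (Ioc 0 1) volume :=
        ((aux_int1 hp).const_mul 2).1
      refine base.congr_fun ?_ measurableSet_Ioc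
      intro x hx
      have hx0 : 0 < x := hx.1
      have e : (x^2 : ℝ) ^ (-(1/2):ℝ) = x⁻¹ := by
        rw [← Real.rpow_natCast x 2, ← Real.rpow_mul hx0.le]
        norm_num
        exact Real.rpow_neg_one x
      show 2 * (1-x^2)^p = g (x^2) * (2*x)
      rw [hg]; simp only []
      rw [e]
      field_simp)
  norm_num at key
  have heq2 : ∫ x in (0:ℝ)..1, g (x^2) * (2*x)
      = ∫ x in (0:ℝ)..1, 2 * (1-x^2)^p := by
    refine intervalIntegral.integral_congr_ae ?_
    refine Filter.Eventually.of_forall fun x hx => ?_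
    rw [uIoc_of_le (by norm_num : (0:ℝ) ≤ 1)] at hx
    have hx0 : 0 < x := hx.1
    have e : (x^2 : ℝ) ^ (-(1/2):ℝ) = x⁻¹ := by
      rw [← Real.rpow_natCast x 2, ← Real.rpow_mul hx0.le]
      norm_num
      exact Real.rpow_neg_one x
    show g (x^2) * (2*x) = 2 * (1-x^2)^p
    rw [hg]; simp only []
    rw [e]; field_simp
  rw [heq2, intervalIntegral.integral_const_mul, aux_beta hp] at key
  have hB : 0 < Real.Gamma (p+3/2) := Real.Gamma_pos_of_pos (by linarith)
  rw [eq_div_iff hB.ne'] at key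
  rw [eq_div_iff (by positivity : (2:ℝ) * Real.Gamma (p+3/2) ≠ 0)]
  linear_combination key

set_option maxHeartbeats 1000000 in
theorem averaged_bessel_lower (α : ℝ) (hα : α > -1/2) (j : ℝ → ℝ)
    (hj : ∀ r : ℝ, j r = (2 * Real.Gamma (α + 1) / (Real.sqrt Real.pi * Real.Gamma (α + 1/2))) *
      ∫ y in (0:ℝ)..1, (1 - y ^ 2) ^ (α - 1/2) * Real.cos (r * y)) :
    ∃ C₁ : ℝ, 0 < C₁ ∧ ∀ lam r : ℝ, 0 < lam → 0 < r →
      ∫ z in (0:ℝ)..1, (1 - j (lam * z / r)) ≥ C₁ * min 1 ((lam / r) ^ 2) := by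
  have hp : -1 < α - 1/2 := by linarith
  set c : ℝ := 2 * Real.Gamma (α + 1) / (Real.sqrt Real.pi * Real.Gamma (α + 1/2)) with hcdef
  have hΓ1 : 0 < Real.Gamma (α+1) := Real.Gamma_pos_of_pos (by linarith)
  have hΓ2 : 0 < Real.Gamma (α+1/2) := Real.Gamma_pos_of_pos (by linarith)
  have hsπ : 0 < Real.sqrt Real.pi := Real.sqrt_pos.2 Real.pi_pos
  have hc : 0 < c := div_pos (by positivity) (by positivity)
  have hIw := aux_int1 hp
  -- normalization
  have hK : c * ∫ y in (0:ℝ)..1, (1 - y^2)^(α - 1/2) = 1 := by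
    rw [aux_K hp]
    have e1 : α - 1/2 + 1 = α + 1/2 := by ring
    have e2 : α - 1/2 + 3/2 = α + 1 := by ring
    rw [e1, e2, Real.Gamma_one_half_eq, hcdef, div_mul_div_comm,
      div_eq_one_iff_eq (by positivity)]
    ring
  -- pointwise identity
  have hj' : ∀ x : ℝ, 1 - j x
      = c * ∫ y in (0:ℝ)..1, (1 - y^2)^(α - 1/2) * (1 - Real.cos (x*y)) := by
    intro x
    have hIwc : IntervalIntegrable (fun y : ℝ => (1 - y^2)^(α - 1/2) * Real.cos (x*y))
        volume 0 1 := by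
      refine hIw.mono_fun ?_ ?_
      · exact ((by fun_prop : Measurable (fun y : ℝ =>
          (1 - y^2)^(α - 1/2) * Real.cos (x*y)))).aestronglyMeasurable
      · filter_upwards with y
        rw [norm_mul]
        refine mul_le_of_le_one_right (norm_nonneg _) ?_
        rw [Real.norm_eq_abs]; exact Real.abs_cos_le_one _
    have hsplit : ∫ y in (0:ℝ)..1, (1 - y^2)^(α - 1/2) * (1 - Real.cos (x*y))
        = (∫ y in (0:ℝ)..1, (1 - y^2)^(α - 1/2))
          - ∫ y in (0:ℝ)..1, (1 - y^2)^(α - 1/2) * Real.cos (x*y) := by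
      rw [← intervalIntegral.integral_sub hIw hIwc]
      exact intervalIntegral.integral_congr fun y _ => by ring
    rw [hsplit, mul_sub, hK, hj x]
  -- second moment and tail mass
  have hIw2 : IntervalIntegrable (fun y : ℝ => (1 - y^2)^(α - 1/2) * y^2) volume 0 1 := by
    refine hIw.mono_fun ?_ ?_
    · exact ((by fun_prop : Measurable (fun y : ℝ =>
        (1 - y^2)^(α - 1/2) * y^2))).aestronglyMeasurable
    · filter_upwards [ae_restrict_mem measurableSet_uIoc] with y hy
      rw [uIoc_of_le (by norm_num : (0:ℝ) ≤ 1)] at hy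
      rw [norm_mul]
      refine mul_le_of_le_one_right (norm_nonneg _) ?_
      rw [Real.norm_eq_abs, abs_of_nonneg (by positivity)]
      nlinarith [hy.1, hy.2]
  set M2 : ℝ := ∫ y in (0:ℝ)..1, (1 - y^2)^(α - 1/2) * y^2 with hM2def
  have hM2 : 0 < M2 := by
    refine intervalIntegral.intervalIntegral_pos_of_pos_on hIw2 (fun y hy => ?_) (by norm_num)
    have h1 : (0:ℝ) < 1 - y^2 := by nlinarith [hy.1, hy.2]
    exact mul_pos (Real.rpow_pos_of_pos h1 _) (pow_pos hy.1 2)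
  have hIwδ : IntervalIntegrable (fun y : ℝ => (1 - y^2)^(α - 1/2)) volume (2/3) 1 := by
    refine hIw.mono_set ?_
    rw [Set.uIcc_of_le (by norm_num : (2/3:ℝ) ≤ 1), Set.uIcc_of_le (by norm_num : (0:ℝ) ≤ 1)]
    exact Icc_subset_Icc (by norm_num) le_rfl
  set δ : ℝ := ∫ y in (2/3:ℝ)..1, (1 - y^2)^(α - 1/2) with hδdef
  have hδ : 0 < δ := by
    refine intervalIntegral.intervalIntegral_pos_of_pos_on hIwδ (fun y hy => ?_) (by norm_num)
    have h1 : (0:ℝ) < 1 - y^2 := by nlinarith [hy.1, hy.2]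
    exact Real.rpow_pos_of_pos h1 _
  have hπ0 := Real.pi_pos
  refine ⟨min (2*c*M2/(3*π^2)) (c*δ/2),
    lt_min (by positivity) (by positivity), fun lam r hlam hr => ?_⟩
  set s : ℝ := lam / r with hsdef
  have hs : 0 < s := div_pos hlam hr
  have hre : (∫ z in (0:ℝ)..1, (1 - j (lam * z / r))) = ∫ z in (0:ℝ)..1, (1 - j (s*z)) :=
    intervalIntegral.integral_congr fun z _ => by rw [hsdef]; ring_nf
  rw [ge_iff_le, hre]
  -- measure setup
  set μ : Measure ℝ := volume.restrict (Set.Ioc (0:ℝ) 1) with hμdef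
  haveI : IsFiniteMeasure μ := ⟨by
    rw [hμdef, Measure.restrict_apply_univ]; exact measure_Ioc_lt_top⟩
  have hwμ : Integrable (fun y : ℝ => (1 - y^2)^(α - 1/2)) μ := hIw.1
  have hw2μ : Integrable (fun y : ℝ => (1 - y^2)^(α - 1/2) * y^2) μ := hIw2.1
  set f : ℝ → ℝ → ℝ := fun z y => (1 - y^2)^(α - 1/2) * (1 - Real.cos (s*z*y)) with hfdef
  have hmeas : AEStronglyMeasurable (Function.uncurry f) (μ.prod μ) := by
    have hm : Measurable (fun q : ℝ × ℝ => (1 - q.2^2)^(α - 1/2) * (1 - Real.cos (s*q.1*q.2))) := by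
      fun_prop
    exact hm.aestronglyMeasurable
  have haeprod : ∀ᵐ q ∂(μ.prod μ), q ∈ Set.Ioc (0:ℝ) 1 ×ˢ Set.Ioc (0:ℝ) 1 := by
    have he : μ.prod μ = (volume.prod volume).restrict
        ((Set.Ioc (0:ℝ) 1) ×ˢ (Set.Ioc (0:ℝ) 1)) := Measure.prod_restrict _ _
    rw [he]; exact ae_restrict_mem (measurableSet_Ioc.prod measurableSet_Ioc)
  have hF : Integrable (Function.uncurry f) (μ.prod μ) := by
    refine ((integrable_const (1:ℝ)).mul_prod (hwμ.const_mul 2)).mono' hmeas ?_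
    filter_upwards [haeprod] with q hq
    obtain ⟨hq1, hq2⟩ := hq
    have hw0 : (0:ℝ) ≤ (1 - q.2^2)^(α - 1/2) :=
      Real.rpow_nonneg (by nlinarith [hq2.1, hq2.2]) _
    have hcb := Real.cos_le_one (s*q.1*q.2)
    have hcb2 := Real.neg_one_le_cos (s*q.1*q.2)
    have : Function.uncurry f q = (1 - q.2^2)^(α - 1/2) * (1 - Real.cos (s*q.1*q.2)) := rfl
    rw [this, Real.norm_eq_abs, abs_of_nonneg (by nlinarith)]
    nlinarith
  set G : ℝ → ℝ := fun z => ∫ y, f z y ∂μ with hGdef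
  have hGint : Integrable G μ := by
    have := hF.integral_prod_left
    exact this
  have hfzint : ∀ z : ℝ, Integrable (fun y => f z y) μ := by
    intro z
    refine (hwμ.const_mul 2).mono' ?_ ?_
    · have hm : Measurable (fun y : ℝ => (1 - y^2)^(α - 1/2) * (1 - Real.cos (s*z*y))) := by
        fun_prop
      exact hm.aestronglyMeasurable
    · filter_upwards [ae_restrict_mem measurableSet_Ioc] with y hy
      have hw0 : (0:ℝ) ≤ (1 - y^2)^(α - 1/2) :=
        Real.rpow_nonneg (by nlinarith [hy.1, hy.2]) _
      have hcb := Real.cos_le_one (s*z*y)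
      have hcb2 := Real.neg_one_le_cos (s*z*y)
      have : f z y = (1 - y^2)^(α - 1/2) * (1 - Real.cos (s*z*y)) := rfl
      rw [this, Real.norm_eq_abs, abs_of_nonneg (by nlinarith)]
      nlinarith
  have hlhs : (∫ z in (0:ℝ)..1, (1 - j (s*z))) = c * ∫ z, G z ∂μ := by
    rw [intervalIntegral.integral_of_le (by norm_num : (0:ℝ) ≤ 1)]
    have : ∀ z, 1 - j (s*z) = c * G z := by
      intro z
      rw [hj' (s*z), hGdef]
      congr 1
      rw [intervalIntegral.integral_of_le (by norm_num : (0:ℝ) ≤ 1)]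
    simp_rw [this]
    rw [MeasureTheory.integral_const_mul]
  rw [hlhs]
  have hM2eq : (∫ y, (1 - y^2)^(α - 1/2) * y^2 ∂μ) = M2 := by
    rw [hM2def, intervalIntegral.integral_of_le (by norm_num : (0:ℝ) ≤ 1)]
  have hC1a : min (2*c*M2/(3*π^2)) (c*δ/2) ≤ 2*c*M2/(3*π^2) := min_le_left _ _
  have hC1b : min (2*c*M2/(3*π^2)) (c*δ/2) ≤ c*δ/2 := min_le_right _ _
  have hmin0 : (0:ℝ) ≤ min 1 (s^2) := le_min zero_le_one (sq_nonneg s)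
  rcases le_total s 3 with hs3 | hs3
  · -- small s : use the quadratic lower bound
    have hzb : ∀ z ∈ Set.Ioc (0:ℝ) 1, 2/π^2*s^2*M2*z^2 ≤ G z := by
      intro z hz
      have key : ∀ y ∈ Set.Ioc (0:ℝ) 1,
          2/π^2*s^2*z^2 * ((1 - y^2)^(α - 1/2) * y^2) ≤ f z y := by
        intro y hy
        have hw0 : (0:ℝ) ≤ (1 - y^2)^(α - 1/2) :=
          Real.rpow_nonneg (by nlinarith [hy.1, hy.2]) _
        have hu0 : 0 ≤ s*z*y := by
          have := hz.1; have := hy.1; positivity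
        have huπ : s*z*y ≤ π := by
          have hzy : z*y ≤ 1 := mul_le_one₀ hz.2 hy.1.le hy.2
          have hzy0 : 0 ≤ z*y := mul_nonneg hz.1.le hy.1.le
          calc s*z*y = s*(z*y) := by ring
            _ ≤ 3*(z*y) := mul_le_mul_of_nonneg_right hs3 hzy0
            _ ≤ 3*1 := mul_le_mul_of_nonneg_left hzy (by norm_num)
            _ ≤ π := by norm_num [Real.pi_gt_three.le]
        have hcos := aux_cos (s*z*y) hu0 huπ
        have hfeq : f z y = (1 - y^2)^(α - 1/2) * (1 - Real.cos (s*z*y)) := rfl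
        rw [hfeq]
        calc 2/π^2*s^2*z^2 * ((1 - y^2)^(α - 1/2) * y^2)
            = (1 - y^2)^(α - 1/2) * (2/π^2*(s*z*y)^2) := by ring
          _ ≤ (1 - y^2)^(α - 1/2) * (1 - Real.cos (s*z*y)) :=
              mul_le_mul_of_nonneg_left hcos hw0
      have hint1 : Integrable (fun y => 2/π^2*s^2*z^2 * ((1 - y^2)^(α - 1/2) * y^2)) μ :=
        hw2μ.const_mul _
      have hmono : (∫ y, 2/π^2*s^2*z^2 * ((1 - y^2)^(α - 1/2) * y^2) ∂μ)
          ≤ ∫ y, f z y ∂μ := by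
        refine integral_mono_ae hint1 (hfzint z) ?_
        filter_upwards [ae_restrict_mem measurableSet_Ioc] with y hy
        exact key y hy
      have heval : (∫ y, 2/π^2*s^2*z^2 * ((1 - y^2)^(α - 1/2) * y^2) ∂μ)
          = 2/π^2*s^2*z^2 * M2 := by
        rw [MeasureTheory.integral_const_mul, hM2eq]
      rw [heval] at hmono
      calc 2/π^2*s^2*M2*z^2 = 2/π^2*s^2*z^2*M2 := by ring
        _ ≤ ∫ y, f z y ∂μ := hmono
        _ = G z := rfl
    have hpoly : Integrable (fun z : ℝ => 2/π^2*s^2*M2*z^2) μ := by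
      rw [hμdef]
      exact (continuous_const.mul (continuous_pow 2)).integrableOn_Ioc
    have hGlb : (∫ z, 2/π^2*s^2*M2*z^2 ∂μ) ≤ ∫ z, G z ∂μ := by
      refine integral_mono_ae hpoly hGint ?_
      filter_upwards [ae_restrict_mem measurableSet_Ioc] with z hz
      exact hzb z hz
    have hz2 : (∫ z, (z:ℝ)^2 ∂μ) = 1/3 := by
      rw [show (∫ z, (z:ℝ)^2 ∂μ) = ∫ z in (0:ℝ)..1, z^2 from
        (intervalIntegral.integral_of_le (by norm_num : (0:ℝ) ≤ 1)).symm]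
      rw [integral_pow]
      norm_num
    have heval2 : (∫ z, 2/π^2*s^2*M2*z^2 ∂μ) = 2/π^2*s^2*M2*(1/3) := by
      have : (fun z : ℝ => 2/π^2*s^2*M2*z^2) = fun z : ℝ => (2/π^2*s^2*M2)*z^2 := by
        funext z; ring
      rw [this, MeasureTheory.integral_const_mul, hz2]
    rw [heval2] at hGlb
    calc min (2*c*M2/(3*π^2)) (c*δ/2) * min 1 (s^2)
        ≤ (2*c*M2/(3*π^2)) * s^2 :=
          mul_le_mul hC1a (min_le_right _ _) hmin0 (by positivity)
      _ = c * (2/π^2*s^2*M2*(1/3)) := by ring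
      _ ≤ c * ∫ z, G z ∂μ := mul_le_mul_of_nonneg_left hGlb hc.le
  · -- large s : swap the integrals
    have hswap : (∫ z, G z ∂μ) = ∫ y, (∫ z, f z y ∂μ) ∂μ := integral_integral_swap hF
    have hHint : Integrable (fun y => ∫ z, f z y ∂μ) μ := hF.integral_prod_right
    have hHlb : ∀ y ∈ Set.Ioc (0:ℝ) 1,
        (Set.Ioi (2/3:ℝ)).indicator (fun t => (1 - t^2)^(α - 1/2) / 2) y
          ≤ ∫ z, f z y ∂μ := by
      intro y hy
      have hw0 : (0:ℝ) ≤ (1 - y^2)^(α - 1/2) :=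
        Real.rpow_nonneg (by nlinarith [hy.1, hy.2]) _
      by_cases hy23 : y ∈ Set.Ioi (2/3:ℝ)
      · rw [Set.indicator_of_mem hy23]
        have hy23' : (2/3:ℝ) < y := hy23
        have ha : 0 < s*y := mul_pos hs hy.1
        have ha2 : 2 ≤ s*y := by nlinarith
        have hcomp : (∫ z, f z y ∂μ)
            = (1 - y^2)^(α - 1/2) * (1 - Real.sin (s*y)/(s*y)) := by
          have e1 : (fun z => f z y)
              = fun z => (1 - y^2)^(α - 1/2) * (1 - Real.cos ((s*y)*z)) := by
            funext z
            have e2 : s*z*y = (s*y)*z := by ring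
            show (1 - y^2)^(α - 1/2) * (1 - Real.cos (s*z*y)) = _
            rw [e2]
          rw [e1, MeasureTheory.integral_const_mul]
          congr 1
          rw [show (∫ z, (1 - Real.cos ((s*y)*z)) ∂μ)
              = ∫ z in (0:ℝ)..1, (1 - Real.cos ((s*y)*z)) from
            (intervalIntegral.integral_of_le (by norm_num : (0:ℝ) ≤ 1)).symm]
          have hci : IntervalIntegrable (fun z : ℝ => Real.cos ((s*y)*z)) volume 0 1 :=
            Continuous.intervalIntegrable (by fun_prop) 0 1
          rw [intervalIntegral.integral_sub intervalIntegrable_const hci]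
          rw [intervalIntegral.integral_const]
          rw [intervalIntegral.integral_comp_mul_left (a := 0) (b := 1) Real.cos ha.ne']
          simp only [mul_zero, mul_one, smul_eq_mul, integral_cos, Real.sin_zero, sub_zero,
            one_mul]
          rw [inv_mul_eq_div]
        rw [hcomp]
        have hsin : Real.sin (s*y) / (s*y) ≤ 1/2 := by
          rw [div_le_iff₀ ha]
          have := Real.sin_le_one (s*y)
          linarith
        calc (1 - y^2)^(α - 1/2)/2 = (1 - y^2)^(α - 1/2) * (1/2) := by ring
          _ ≤ (1 - y^2)^(α - 1/2) * (1 - Real.sin (s*y)/(s*y)) :=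
              mul_le_mul_of_nonneg_left (by linarith) hw0
      · rw [Set.indicator_of_notMem hy23]
        refine integral_nonneg fun z => ?_
        have := Real.cos_le_one (s*z*y)
        have hfeq : f z y = (1 - y^2)^(α - 1/2) * (1 - Real.cos (s*z*y)) := rfl
        rw [hfeq]
        exact mul_nonneg hw0 (by linarith)
    have hind : Integrable
        ((Set.Ioi (2/3:ℝ)).indicator (fun t => (1 - t^2)^(α - 1/2) / 2)) μ :=
      (hwμ.div_const 2).indicator measurableSet_Ioi
    have hHlb' : (∫ y, (Set.Ioi (2/3:ℝ)).indicator (fun t => (1 - t^2)^(α - 1/2) / 2) y ∂μ)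
        ≤ ∫ y, (∫ z, f z y ∂μ) ∂μ := by
      refine integral_mono_ae hind hHint ?_
      filter_upwards [ae_restrict_mem measurableSet_Ioc] with y hy
      exact hHlb y hy
    have hindval : (∫ y, (Set.Ioi (2/3:ℝ)).indicator (fun t => (1 - t^2)^(α - 1/2) / 2) y ∂μ)
        = δ/2 := by
      rw [MeasureTheory.integral_indicator measurableSet_Ioi]
      rw [hμdef, Measure.restrict_restrict measurableSet_Ioi]
      rw [show Set.Ioi (2/3:ℝ) ∩ Set.Ioc 0 1 = Set.Ioc (2/3) 1 by
        ext t
        simp only [Set.mem_inter_iff, Set.mem_Ioi, Set.mem_Ioc]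
        constructor
        · rintro ⟨h1, _, h3⟩; exact ⟨h1, h3⟩
        · rintro ⟨h1, h2⟩; exact ⟨h1, by linarith, h2⟩]
      rw [show (∫ y in Set.Ioc (2/3:ℝ) 1, (1 - y^2)^(α - 1/2)/2)
          = ∫ y in (2/3:ℝ)..1, (1 - y^2)^(α - 1/2)/2 from
        (intervalIntegral.integral_of_le (by norm_num : (2/3:ℝ) ≤ 1)).symm]
      rw [intervalIntegral.integral_div]
    rw [hindval] at hHlb'
    calc min (2*c*M2/(3*π^2)) (c*δ/2) * min 1 (s^2)
        ≤ (c*δ/2) * 1 := mul_le_mul hC1b (min_le_left _ _) hmin0 (by positivity)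
      _ = c * (δ/2) := by ring
      _ ≤ c * ∫ y, (∫ z, f z y ∂μ) ∂μ := mul_le_mul_of_nonneg_left hHlb' hc.le
      _ = c * ∫ z, G z ∂μ := by rw [hswap]
end
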